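/- arXiv:2202.03062 — 5 statements merged into one kernel-verified Lean document; each statement's English description precedes it below -/
import Mathlib

section
/- Let G be a finite abelian group of order n and let R, L, S be subsets of G with R = R⁻¹, L = L⁻¹ and 1 ∉ R ∪ L. Then the multiset of eigenvalues of the adjacency matrix of the semi-Cayley graph SC(G,R,L,S) is exactly {λᵢ⁺, λᵢ⁻ : i = 1, …, n}, where λᵢ⁺ = (χᵢ(R) + χᵢ(L) + √((χᵢ(R) − χᵢ(L))² + 4|χᵢ(S)|²))/2 and λᵢ⁻ = (χᵢ(R) + χᵢ(L) − √((χᵢ(R) − χᵢ(L))² + 4|χᵢ(S)|²))/2. -/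
open scoped Classical Pointwise
open Complex Finset Matrix

noncomputable section

/-- Adjacency matrix of the semi-Cayley graph `SC(G,R,L,S)` on vertex set `G × Fin 2`. -/
def scAdj {G : Type*} [Group G] (R L S : Finset G) :
    Matrix (G × Fin 2) (G × Fin 2) ℂ := fun u v =>
  if u.2 = 0 ∧ v.2 = 0 ∧ v.1 * u.1⁻¹ ∈ R then 1
  else if u.2 = 1 ∧ v.2 = 1 ∧ v.1 * u.1⁻¹ ∈ L then 1
  else if u.2 = 0 ∧ v.2 = 1 ∧ v.1 * u.1⁻¹ ∈ S then 1
  else if u.2 = 1 ∧ v.2 = 0 ∧ u.1 * v.1⁻¹ ∈ S then 1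
  else 0

/-- Adjacency matrix of the Cayley graph `Cay(G,T)`. -/
def cayAdj {G : Type*} [Group G] (T : Finset G) : Matrix G G ℂ := fun u v =>
  if v * u⁻¹ ∈ T then 1 else 0

/-- Transfer matrix `H(t) = exp(-i t A)`. -/
def transfer {V : Type*} [Fintype V] [DecidableEq V]
    (A : Matrix V V ℂ) (t : ℝ) : Matrix V V ℂ :=
  NormedSpace.exp ((-(Complex.I * (t : ℂ))) • A)

/-- Perfect state transfer from `u` to `v` at time `t`. -/
def pst {V : Type*} [Fintype V] [DecidableEq V]
    (A : Matrix V V ℂ) (u v : V) (t : ℝ) : Prop :=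
  ‖transfer A t u v‖ = 1

/-- A matrix is integral if all its eigenvalues are integers. -/
def isIntegral {V : Type*} [Fintype V] [DecidableEq V] (A : Matrix V V ℂ) : Prop :=
  ∀ μ ∈ spectrum ℂ A, ∃ k : ℤ, μ = (k : ℂ)

/-- The character sum `χ(X) = ∑_{x ∈ X} χ(x)`. -/
def charSum {G : Type*} [Group G] (χ : G →* ℂ) (X : Finset G) : ℂ := ∑ x ∈ X, χ x

/-- The eigenvalue `λ_χ⁺` of `SC(G,R,L,S)`, with the convention `λ_χ⁺ = χ(R)` when `χ(S) = 0`. -/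
def lamP {G : Type*} [Group G] (R L S : Finset G) (χ : G →* ℂ) : ℝ :=
  if charSum χ S = 0 then (charSum χ R).re
  else ((charSum χ R).re + (charSum χ L).re +
    Real.sqrt (((charSum χ R).re - (charSum χ L).re) ^ 2 +
      4 * ‖charSum χ S‖ ^ 2)) / 2

/-- The eigenvalue `λ_χ⁻` of `SC(G,R,L,S)`, with the convention `λ_χ⁻ = χ(L)` when `χ(S) = 0`. -/
def lamM {G : Type*} [Group G] (R L S : Finset G) (χ : G →* ℂ) : ℝ :=
  if charSum χ S = 0 then (charSum χ L).re
  else ((charSum χ R).re + (charSum χ L).re -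
    Real.sqrt (((charSum χ R).re - (charSum χ L).re) ^ 2 +
      4 * ‖charSum χ S‖ ^ 2)) / 2

/-- The 2-adic valuation `ν₂` with `ν₂(0) = ∞`, extended (junk value `0`) to the reals. -/
def nu2 (x : ℝ) : WithTop ℤ :=
  if x = 0 then ⊤
  else if hq : ∃ q : ℚ, (q : ℝ) = x then ((padicValRat 2 hq.choose : ℤ) : WithTop ℤ)
  else 0


section Aux

open Polynomial

set_option linter.unusedSectionVars false
set_option maxHeartbeats 1000000

variable {G : Type*} [CommGroup G] [Fintype G] [DecidableEq G] [Fintype (G →* ℂ)]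

lemma char_norm_one (χ : G →* ℂ) (g : G) : ‖χ g‖ = 1 := by
  have h : (χ g) ^ (Fintype.card G) = 1 := by
    rw [← map_pow, pow_card_eq_one, _root_.map_one]
  exact Complex.norm_eq_one_of_pow_eq_one h Fintype.card_ne_zero

lemma char_inv (χ : G →* ℂ) (g : G) : χ g⁻¹ = starRingEnd ℂ (χ g) := by
  rw [← Complex.inv_eq_conj (char_norm_one χ g), ← map_inv]

lemma charSum_real {T : Finset G} (hT : T⁻¹ = T) (χ : G →* ℂ) :
    charSum χ T = ((charSum χ T).re : ℂ) := by
  have hconj : starRingEnd ℂ (charSum χ T) = charSum χ T := by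
    rw [show charSum χ T = ∑ x ∈ T, χ x from rfl, map_sum]
    rw [show ∑ x ∈ T, starRingEnd ℂ (χ x) = ∑ x ∈ T, χ x⁻¹ from
      Finset.sum_congr rfl fun x _ => (char_inv χ x).symm]
    refine Finset.sum_nbij' (fun x => x⁻¹) (fun x => x⁻¹) ?_ ?_ (fun x _ => by simp)
      (fun x _ => by simp) (fun x hx => rfl)
    · intro x hx; rw [← hT]; exact Finset.inv_mem_inv hx
    · intro x hx; rw [← hT] at hx; simpa using Finset.inv_mem_inv hx
  exact (Complex.conj_eq_iff_re.mp hconj).symm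

lemma charSum_S_mul (χ : G →* ℂ) (S : Finset G) :
    charSum χ S * (∑ s ∈ S, χ s⁻¹) = ((‖charSum χ S‖ ^ 2 : ℝ) : ℂ) := by
  have h : ∑ s ∈ S, χ s⁻¹ = starRingEnd ℂ (charSum χ S) := by
    rw [show charSum χ S = ∑ x ∈ S, χ x from rfl, map_sum]; exact Finset.sum_congr rfl fun x _ => char_inv χ x
  rw [h, Complex.mul_conj, Complex.sq_norm]

/-- The equiv between `G →* ℂˣ` and `G →* ℂ`. -/
def unitsEquiv : (G →* ℂˣ) ≃ (G →* ℂ) where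
  toFun ψ := (Units.coeHom ℂ).comp ψ
  invFun χ := χ.toHomUnits
  left_inv ψ := by ext g; rfl
  right_inv χ := by ext g; rfl

instance : HasEnoughRootsOfUnity ℂ (Monoid.exponent G) := by
  have : NeZero ((Monoid.exponent G : ℂ)) :=
    ⟨by exact_mod_cast Monoid.exponent_ne_zero_of_finite⟩
  infer_instance

/-- An equiv `(G →* ℂ) ≃ G`. -/
def charEquiv : (G →* ℂ) ≃ G :=
  unitsEquiv.symm.trans (CommGroup.monoidHom_mulEquiv_of_hasEnoughRootsOfUnity G ℂ).some.toEquiv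

lemma sum_chars (x : G) :
    ∑ χ : G →* ℂ, χ x = if x = 1 then (Fintype.card G : ℂ) else 0 := by
  split_ifs with hx
  · subst hx; simp [Fintype.card_congr (charEquiv (G := G))]
  · obtain ⟨φ, hφ⟩ := CommGroup.exists_apply_ne_one_of_hasEnoughRootsOfUnity G ℂ hx
    set ω : G →* ℂ := (Units.coeHom ℂ).comp φ with hω
    have hbij : Function.Bijective (fun χ : G →* ℂ => ω * χ) := by
      refine Finite.injective_iff_bijective.mp fun χ χ' h => ?_
      ext g
      have := congrArg (fun ψ : G →* ℂ => ψ g) h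
      simp only [MonoidHom.mul_apply] at this
      exact mul_left_cancel₀ (Units.ne_zero (φ g)) this
    have key : ω x * ∑ χ : G →* ℂ, χ x = ∑ χ : G →* ℂ, χ x := by
      rw [Finset.mul_sum]
      exact Fintype.sum_bijective _ hbij _ _ fun χ => rfl
    have hωx : ω x ≠ 1 := by
      intro h
      exact hφ (Units.ext (by simpa [hω] using h))
    by_contra hs
    have h0 : (ω x - 1) * ∑ χ : G →* ℂ, χ x = 0 := by
      rw [sub_mul, one_mul, key, sub_self]
    rcases mul_eq_zero.mp h0 with h | h
    · exact hωx (by linear_combination h)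
    · exact hs h

section MatrixLemmas

variable {n R' : Type*} [Fintype n] [DecidableEq n] [CommRing R']

lemma charpoly_eq_of_similar [IsDomain R'] (A P D : Matrix n n R')
    (h : A * P = P * D) (hP : P.det ≠ 0) : A.charpoly = D.charpoly := by
  have key : charmatrix A * P.map C = P.map C * charmatrix D := by
    have hA : charmatrix A = Matrix.scalar n (X : R'[X]) - A.map C := rfl
    have hD : charmatrix D = Matrix.scalar n (X : R'[X]) - D.map C := rfl
    rw [hA, hD, sub_mul, mul_sub, ← Matrix.map_mul, ← Matrix.map_mul, h]
    congr 1
    exact (Matrix.scalar_commute (X : R'[X]) (fun r => Commute.all _ _) (P.map C)).eq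
  have hdet := congrArg Matrix.det key
  rw [det_mul, det_mul] at hdet
  have hPC : (P.map C).det = C P.det := by
    rw [← RingHom.mapMatrix_apply, ← RingHom.map_det]
  rw [hPC, mul_comm] at hdet
  exact mul_left_cancel₀ (by simpa using hP) hdet

lemma charmatrix_blockDiagonal {o : Type*} [Fintype o] [DecidableEq o]
    (M : o → Matrix n n R') :
    charmatrix (blockDiagonal M) = blockDiagonal (fun k => charmatrix (M k)) := by
  ext ⟨i, k⟩ ⟨j, k'⟩
  by_cases hk : k = k'
  · subst hk
    by_cases hij : i = j
    · subst hij; simp [charmatrix_apply, blockDiagonal_apply, Matrix.diagonal_apply]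
    · simp [charmatrix_apply_ne _ _ _ (by simp [hij] : (i,k) ≠ (j,k)),
        blockDiagonal_apply, charmatrix_apply_ne _ _ _ hij]
  · simp [charmatrix_apply_ne _ _ _ (by simp [hk] : (i,k) ≠ (j,k')),
      blockDiagonal_apply, hk]

lemma charpoly_blockDiagonal {o : Type*} [Fintype o] [DecidableEq o]
    (M : o → Matrix n n R') :
    (blockDiagonal M).charpoly = ∏ k : o, (M k).charpoly := by
  rw [Matrix.charpoly, charmatrix_blockDiagonal, det_blockDiagonal]
  rfl

lemma charpoly_fin_two' (M : Matrix (Fin 2) (Fin 2) R') :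
    M.charpoly = (X - C (M 0 0)) * (X - C (M 1 1)) - C (M 0 1 * M 1 0) := by
  rw [Matrix.charpoly, det_fin_two, charmatrix_apply_eq, charmatrix_apply_eq,
    charmatrix_apply_ne _ _ _ (by decide : (0 : Fin 2) ≠ 1),
    charmatrix_apply_ne _ _ _ (by decide : (1 : Fin 2) ≠ 0), _root_.map_mul]
  ring

lemma quad_factor {p m a b d : ℂ} (h1 : p + m = a + b) (h2 : p * m = a * b - d) :
    (X - C a) * (X - C b) - C d = (X - C p) * (X - C m) := by
  have h1' : C p + C m = C a + C b := by rw [← C_add, ← C_add, h1]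
  have h2' : C p * C m = C a * C b - C d := by rw [← C_mul, ← C_mul, h2, map_sub]
  linear_combination (X : ℂ[X]) * h1' - h2'

end MatrixLemmas

lemma sum_right (χ : G →* ℂ) (T : Finset G) (g : G) :
    ∑ x : G, (if x * g⁻¹ ∈ T then χ x else 0) = (∑ t ∈ T, χ t) * χ g := by
  rw [← Equiv.sum_comp (Equiv.mulRight g) (fun x => if x * g⁻¹ ∈ T then χ x else 0)]
  simp only [Equiv.coe_mulRight, mul_inv_cancel_right]
  rw [Finset.sum_ite_mem, Finset.univ_inter, Finset.sum_mul]
  exact Finset.sum_congr rfl fun t _ => (_root_.map_mul χ t g)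

lemma sum_left (χ : G →* ℂ) (T : Finset G) (g : G) :
    ∑ x : G, (if g * x⁻¹ ∈ T then χ x else 0) = (∑ t ∈ T, χ t⁻¹) * χ g := by
  rw [← Equiv.sum_comp ((Equiv.inv G).trans (Equiv.mulRight g))
    (fun x => if g * x⁻¹ ∈ T then χ x else 0)]
  simp only [Equiv.trans_apply, Equiv.inv_apply, Equiv.coe_mulRight]
  have : ∀ x : G, g * (x⁻¹ * g)⁻¹ = x := fun x => by group
  simp only [this]
  rw [Finset.sum_ite_mem, Finset.univ_inter, Finset.sum_mul]
  exact Finset.sum_congr rfl fun t _ => by rw [_root_.map_mul, map_inv]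



def Umat (e : (G →* ℂ) ≃ G) : Matrix G G ℂ := Matrix.of fun g h => (e.symm h) g

def Pmat (e : (G →* ℂ) ≃ G) : Matrix (G × Fin 2) (G × Fin 2) ℂ :=
  blockDiagonal fun _ : Fin 2 => Umat e

def Mmat (R L S : Finset G) (χ : G →* ℂ) : Matrix (Fin 2) (Fin 2) ℂ :=
  !![charSum χ R, charSum χ S; ∑ s ∈ S, χ s⁻¹, charSum χ L]

def Dmat (R L S : Finset G) (e : (G →* ℂ) ≃ G) : Matrix (G × Fin 2) (G × Fin 2) ℂ :=
  Matrix.of fun u v => if u.1 = v.1 then Mmat R L S (e.symm u.1) u.2 v.2 else 0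

lemma Dmat_eq_reindex (R L S : Finset G) (e : (G →* ℂ) ≃ G) :
    Dmat R L S e = (Matrix.reindex (Equiv.prodComm (Fin 2) G) (Equiv.prodComm (Fin 2) G))
      (blockDiagonal fun h => Mmat R L S (e.symm h)) := by
  ext ⟨g, i⟩ ⟨h, k⟩
  rw [Matrix.reindex_apply, Matrix.submatrix_apply]
  simp only [Equiv.prodComm_symm, Equiv.prodComm_apply, Prod.swap_prod_mk]
  rw [Matrix.blockDiagonal_apply]
  rfl

lemma Umat_det_ne_zero (e : (G →* ℂ) ≃ G) : (Umat e).det ≠ 0 := by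
  set V : Matrix G G ℂ := Matrix.of fun g h => (e.symm g) h⁻¹ with hV
  have hUV : Umat e * V = (Fintype.card G : ℂ) • 1 := by
    ext g h
    rw [Matrix.mul_apply]
    have hterm : ∀ x, Umat e g x * V x h = (e.symm x) (g * h⁻¹) := fun x => by
      simp [Umat, hV, _root_.map_mul]
    simp_rw [hterm]
    rw [Equiv.sum_comp e.symm (fun χ : G →* ℂ => χ (g * h⁻¹)), sum_chars]
    simp [Matrix.smul_apply, Matrix.one_apply, mul_inv_eq_one]
  intro h0
  have hdet := congrArg Matrix.det hUV
  rw [det_mul, h0, zero_mul, Matrix.det_smul, det_one, mul_one] at hdet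
  exact pow_ne_zero _ (Nat.cast_ne_zero.mpr Fintype.card_ne_zero) hdet.symm

lemma Pmat_det_ne_zero (e : (G →* ℂ) ≃ G) : (Pmat e).det ≠ 0 := by
  rw [Pmat, det_blockDiagonal, Finset.prod_const]
  exact pow_ne_zero _ (Umat_det_ne_zero e)

lemma scAdj_mul_Pmat (R L S : Finset G) (e : (G →* ℂ) ≃ G) :
    scAdj R L S * Pmat e = Pmat e * Dmat R L S e := by
  have key : ∀ (χ : G →* ℂ) (g : G) (i k : Fin 2),
      (∑ x : G, scAdj R L S (g, i) (x, k) * χ x) = χ g * Mmat R L S χ i k := by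
    intro χ g i k
    fin_cases i <;> fin_cases k
    · calc ∑ x : G, scAdj R L S (g, 0) (x, 0) * χ x
          = ∑ x : G, (if x * g⁻¹ ∈ R then χ x else 0) := by
            refine Finset.sum_congr rfl fun x _ => ?_
            by_cases hx : x * g⁻¹ ∈ R <;> simp [scAdj, hx]
        _ = (∑ t ∈ R, χ t) * χ g := sum_right χ R g
        _ = χ g * Mmat R L S χ 0 0 := by rw [Mmat]; simp [charSum, mul_comm]
    · calc ∑ x : G, scAdj R L S (g, 0) (x, 1) * χ x
          = ∑ x : G, (if x * g⁻¹ ∈ S then χ x else 0) := by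
            refine Finset.sum_congr rfl fun x _ => ?_
            by_cases hx : x * g⁻¹ ∈ S <;> simp [scAdj, hx]
        _ = (∑ t ∈ S, χ t) * χ g := sum_right χ S g
        _ = χ g * Mmat R L S χ 0 1 := by rw [Mmat]; simp [charSum, mul_comm]
    · calc ∑ x : G, scAdj R L S (g, 1) (x, 0) * χ x
          = ∑ x : G, (if g * x⁻¹ ∈ S then χ x else 0) := by
            refine Finset.sum_congr rfl fun x _ => ?_
            by_cases hx : g * x⁻¹ ∈ S <;> simp [scAdj, hx]
        _ = (∑ t ∈ S, χ t⁻¹) * χ g := sum_left χ S g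
        _ = χ g * Mmat R L S χ 1 0 := by rw [Mmat]; simp [mul_comm]
    · calc ∑ x : G, scAdj R L S (g, 1) (x, 1) * χ x
          = ∑ x : G, (if x * g⁻¹ ∈ L then χ x else 0) := by
            refine Finset.sum_congr rfl fun x _ => ?_
            by_cases hx : x * g⁻¹ ∈ L <;> simp [scAdj, hx]
        _ = (∑ t ∈ L, χ t) * χ g := sum_right χ L g
        _ = χ g * Mmat R L S χ 1 1 := by rw [Mmat]; simp [charSum, mul_comm]
  ext ⟨g, i⟩ ⟨h, k⟩
  rw [Matrix.mul_apply, Matrix.mul_apply]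
  rw [Fintype.sum_prod_type, Fintype.sum_prod_type]
  have hP : ∀ x j, Pmat e (x, j) (h, k) = if j = k then (e.symm h) x else 0 := fun x j => by
    simp [Pmat, blockDiagonal_apply, Umat]
  have hP' : ∀ x j, Pmat e (g, i) (x, j) = if i = j then (e.symm x) g else 0 := fun x j => by
    simp [Pmat, blockDiagonal_apply, Umat]
  have hD : ∀ x j, Dmat R L S e (x, j) (h, k) =
      if x = h then Mmat R L S (e.symm x) j k else 0 := fun x j => rfl
  simp only [hP, hP', hD, mul_ite, mul_zero, ite_mul, zero_mul,
    Finset.sum_ite_eq', Finset.sum_ite_eq, Finset.mem_univ, if_true]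
  rw [Finset.sum_comm]
  simp only [Finset.sum_ite_eq', Finset.sum_ite_eq, Finset.mem_univ, if_true]
  exact key (e.symm h) g i k


end Aux

set_option maxHeartbeats 1000000 in
/-- The multiset of eigenvalues of the semi-Cayley graph `SC(G,R,L,S)` over a
finite abelian group `G` is `{λ_χ⁺, λ_χ⁻ : χ ∈ Irr(G)}`, expressed via the characteristic
polynomial. -/
theorem semiCayley_eigenvalues
    {G : Type*} [CommGroup G] [Fintype G] [DecidableEq G] [Fintype (G →* ℂ)]
    (R L S : Finset G) (hR : R⁻¹ = R) (hL : L⁻¹ = L)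
    (h1R : (1 : G) ∉ R) (h1L : (1 : G) ∉ L) :
    (scAdj R L S).charpoly =
      ∏ χ : G →* ℂ,
        ((Polynomial.X - Polynomial.C (((((charSum χ R).re + (charSum χ L).re +
              Real.sqrt (((charSum χ R).re - (charSum χ L).re) ^ 2 +
                4 * ‖charSum χ S‖ ^ 2)) / 2 : ℝ) : ℂ))) *
         (Polynomial.X - Polynomial.C (((((charSum χ R).re + (charSum χ L).re -
              Real.sqrt (((charSum χ R).re - (charSum χ L).re) ^ 2 +
                4 * ‖charSum χ S‖ ^ 2)) / 2 : ℝ) : ℂ)))) := by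
  classical
  let e : (G →* ℂ) ≃ G := charEquiv
  rw [charpoly_eq_of_similar (scAdj R L S) (Pmat e) (Dmat R L S e)
    (scAdj_mul_Pmat R L S e) (Pmat_det_ne_zero e)]
  rw [Dmat_eq_reindex, Matrix.charpoly_reindex, charpoly_blockDiagonal]
  rw [Equiv.prod_comp e.symm (fun χ : G →* ℂ => (Mmat R L S χ).charpoly)]
  refine Finset.prod_congr rfl fun χ _ => ?_
  rw [charpoly_fin_two']
  have h00 : Mmat R L S χ 0 0 = charSum χ R := by simp [Mmat]
  have h01 : Mmat R L S χ 0 1 = charSum χ S := by simp [Mmat]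
  have h10 : Mmat R L S χ 1 0 = ∑ s ∈ S, χ s⁻¹ := by simp [Mmat]
  have h11 : Mmat R L S χ 1 1 = charSum χ L := by simp [Mmat]
  rw [h00, h01, h10, h11, charSum_S_mul]
  set a : ℝ := (charSum χ R).re with ha'
  set b : ℝ := (charSum χ L).re with hb'
  set c : ℝ := ‖charSum χ S‖ with hc'
  set s : ℝ := Real.sqrt ((a - b) ^ 2 + 4 * c ^ 2) with hs'
  have hs : s ^ 2 = (a - b) ^ 2 + 4 * c ^ 2 := Real.sq_sqrt (by positivity)
  have haR : charSum χ R = (a : ℂ) := charSum_real hR χ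
  have hbL : charSum χ L = (b : ℂ) := charSum_real hL χ
  rw [haR, hbL]
  refine quad_factor ?_ ?_
  · push_cast; ring
  · have hsC : (s : ℂ) ^ 2 = ((a : ℂ) - b) ^ 2 + 4 * (c : ℂ) ^ 2 := by exact_mod_cast hs
    push_cast
    linear_combination (-1/4 : ℂ) * hsC


end
end

section
/- Let G be a finite abelian group, R ⊆ G with R = R⁻¹ and 1 ∉ R, and S ⊆ G. Let C be the n × n complex 0/1 matrix indexed by G with C_{x,y} = 1 if and only if yx⁻¹ ∈ S, and suppose CCᵀ = I. If the Cayley graph Cay(G,R) has perfect state transfer from g to h at a time t that is an integer multiple of π, then the semi-Cayley graph SC(G,R,R,S) has perfect state transfer from (g,0) to (h,0) and from (g,1) to (h,1) at time t. -/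
open scoped Classical Pointwise
open Complex Finset Matrix

noncomputable section

/-! ### Auxiliary lemmas -/

/-- The off-diagonal block matrix `[[0, C],[Cᵀ, 0]]` of the semi-Cayley graph. -/
def qMat {G : Type*} [Group G] (S : Finset G) : Matrix (G × Fin 2) (G × Fin 2) ℂ := fun u v =>
  if u.2 = 0 ∧ v.2 = 1 then cayAdj S u.1 v.1
  else if u.2 = 1 ∧ v.2 = 0 then cayAdj S v.1 u.1
  else 0

lemma exp_smul_one' {V : Type*} [Fintype V] [DecidableEq V] (a : ℂ) :
    NormedSpace.exp (a • (1 : Matrix V V ℂ)) = (Complex.exp a) • (1 : Matrix V V ℂ) := by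
  letI : SeminormedRing (Matrix V V ℂ) := Matrix.linftyOpSemiNormedRing
  letI : NormedRing (Matrix V V ℂ) := Matrix.linftyOpNormedRing
  letI : NormedAlgebra ℂ (Matrix V V ℂ) := Matrix.linftyOpNormedAlgebra
  have h1 : a • (1 : Matrix V V ℂ) = algebraMap ℂ (Matrix V V ℂ) a :=
    (Algebra.algebraMap_eq_smul_one a).symm
  erw [h1, ← NormedSpace.algebraMap_exp_comm, Algebra.algebraMap_eq_smul_one,
    Complex.exp_eq_exp_ℂ]

lemma scalar_exp_tail (a : ℂ) :
    ∑' n : ℕ, ((Nat.factorial (n + 1) : ℂ))⁻¹ * a ^ (n + 1) = Complex.exp a - 1 := by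
  have hssummable : Summable fun n : ℕ => ((Nat.factorial n : ℂ))⁻¹ • a ^ n :=
    NormedSpace.expSeries_summable' (𝕂 := ℂ) a
  have hexp : Complex.exp a
      = 1 + ∑' n : ℕ, ((Nat.factorial (n + 1) : ℂ))⁻¹ * a ^ (n + 1) := by
    rw [Complex.exp_eq_exp_ℂ, NormedSpace.exp_eq_tsum ℂ]
    beta_reduce
    rw [Summable.tsum_eq_zero_add hssummable]
    simp [smul_eq_mul]
  rw [hexp]; ring

set_option maxHeartbeats 1000000 in
lemma exp_smul_idem {V : Type*} [Fintype V] [DecidableEq V] (a : ℂ) (E : Matrix V V ℂ)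
    (hE : E * E = E) :
    NormedSpace.exp (a • E) = 1 + (Complex.exp a - 1) • E := by
  letI : SeminormedRing (Matrix V V ℂ) := Matrix.linftyOpSemiNormedRing
  letI : NormedRing (Matrix V V ℂ) := Matrix.linftyOpNormedRing
  letI : NormedAlgebra ℂ (Matrix V V ℂ) := Matrix.linftyOpNormedAlgebra
  have hpow : ∀ n : ℕ, E ^ (n + 1) = E := by
    intro n
    induction n with
    | zero => simp
    | succ m ih => rw [pow_succ, ih, hE]
  have hsummable : Summable fun n : ℕ => ((Nat.factorial n : ℂ))⁻¹ • (a • E) ^ n :=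
    NormedSpace.expSeries_summable' (𝕂 := ℂ) (a • E)
  have hssummable : Summable fun n : ℕ => ((Nat.factorial n : ℂ))⁻¹ * a ^ n := by
    simpa [smul_eq_mul] using NormedSpace.expSeries_summable' (𝕂 := ℂ) a
  have htail : Summable fun n : ℕ => ((Nat.factorial (n + 1) : ℂ))⁻¹ * a ^ (n + 1) :=
    (summable_nat_add_iff 1).mpr hssummable
  rw [NormedSpace.exp_eq_tsum ℂ]
  beta_reduce
  rw [Summable.tsum_eq_zero_add hsummable]
  have h0 : ((Nat.factorial 0 : ℂ))⁻¹ • (a • E) ^ 0 = (1 : Matrix V V ℂ) := by simp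
  rw [h0]
  congr 1
  have hterm : ∀ n : ℕ, ((Nat.factorial (n + 1) : ℂ))⁻¹ • (a • E) ^ (n + 1)
      = (((Nat.factorial (n + 1) : ℂ))⁻¹ * a ^ (n + 1)) • E := by
    intro n
    rw [smul_pow, hpow, smul_smul]
  simp_rw [hterm]
  rw [Summable.tsum_smul_const htail, scalar_exp_tail]

section Grp
variable {G : Type*} [CommGroup G] [Fintype G] [DecidableEq G]
set_option linter.unusedSectionVars false

lemma cayAdj_transpose (S : Finset G) : (cayAdj S)ᵀ = cayAdj S⁻¹ := by
  ext u v
  simp [cayAdj, Matrix.transpose_apply, Finset.mem_inv', _root_.mul_inv_rev]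

lemma cayAdj_comm (T U : Finset G) : cayAdj T * cayAdj U = cayAdj U * cayAdj T := by
  ext u v
  simp only [Matrix.mul_apply]
  apply Fintype.sum_equiv ((Equiv.inv G).trans (Equiv.mulLeft (u * v)))
  intro w
  simp only [Equiv.trans_apply, Equiv.inv_apply, Equiv.coe_mulLeft, cayAdj]
  have h1 : u * v * w⁻¹ * u⁻¹ = v * w⁻¹ := by
    rw [mul_comm u v, mul_right_comm v u w⁻¹, mul_inv_cancel_right]
  have h2 : v * (u * v * w⁻¹)⁻¹ = w * u⁻¹ := by
    rw [_root_.mul_inv_rev, _root_.mul_inv_rev, inv_inv, mul_left_comm v w,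
      mul_inv_cancel_left]
  simp only [h1, h2]
  ring_nf

lemma scAdj_decomp (R S : Finset G) :
    scAdj R R S = Matrix.blockDiagonal (fun _ : Fin 2 => cayAdj R) + qMat S := by
  ext ⟨x, i⟩ ⟨y, j⟩
  fin_cases i <;> fin_cases j <;>
    simp [scAdj, cayAdj, qMat, Matrix.blockDiagonal_apply, Matrix.add_apply]

lemma qMat_sq (S : Finset G) (hC : cayAdj S * (cayAdj S)ᵀ = 1) :
    qMat S * qMat S = (1 : Matrix (G × Fin 2) (G × Fin 2) ℂ) := by
  have hC' : (cayAdj S)ᵀ * cayAdj S = 1 := mul_eq_one_comm.mp hC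
  have e1 : ∀ x y : G, ∑ z, cayAdj S x z * cayAdj S y z = if x = y then (1:ℂ) else 0 := by
    intro x y
    have := congrFun (congrFun hC x) y
    simpa [Matrix.mul_apply, Matrix.one_apply] using this
  have e2 : ∀ x y : G, ∑ z, cayAdj S z x * cayAdj S z y = if x = y then (1:ℂ) else 0 := by
    intro x y
    have := congrFun (congrFun hC' x) y
    simpa [Matrix.mul_apply, Matrix.one_apply] using this
  ext ⟨x, i⟩ ⟨y, j⟩
  rw [Matrix.mul_apply, Fintype.sum_prod_type]
  simp only [Fin.sum_univ_two]
  fin_cases i <;> fin_cases j <;>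
    simp [qMat, Matrix.one_apply, Prod.ext_iff, e1, e2]

lemma blockDiag_comm_qMat (R S : Finset G) :
    Matrix.blockDiagonal (fun _ : Fin 2 => cayAdj R) * qMat S
      = qMat S * Matrix.blockDiagonal (fun _ : Fin 2 => cayAdj R) := by
  have hACt : cayAdj R * (cayAdj S)ᵀ = (cayAdj S)ᵀ * cayAdj R := by
    rw [cayAdj_transpose]; exact cayAdj_comm _ _
  have f1 : ∀ x y : G, ∑ z, cayAdj R x z * cayAdj S z y
      = ∑ z, cayAdj S x z * cayAdj R z y := by
    intro x y
    have := congrFun (congrFun (cayAdj_comm R S) x) y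
    simpa [Matrix.mul_apply] using this
  have f2 : ∀ x y : G, ∑ z, cayAdj R x z * cayAdj S y z
      = ∑ z, cayAdj S z x * cayAdj R z y := by
    intro x y
    have := congrFun (congrFun hACt x) y
    simpa [Matrix.mul_apply, Matrix.transpose_apply] using this
  ext ⟨x, i⟩ ⟨y, j⟩
  simp only [Matrix.mul_apply, Fintype.sum_prod_type, Fin.sum_univ_two]
  fin_cases i <;> fin_cases j <;>
    simp [qMat, Matrix.blockDiagonal_apply, f1, f2]

end Grp

/-- If `C Cᵀ = I` and `Cay(G,R)` has PST from `g` to `h` at a time `t ∈ πℤ`,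
then `SC(G,R,R,S)` has PST from `(g,0)` to `(h,0)` and from `(g,1)` to `(h,1)` at time `t`. -/
theorem semiCayley_pst_of_cayley_pst
    {G : Type*} [CommGroup G] [Fintype G] [DecidableEq G]
    (R S : Finset G) (hR : R⁻¹ = R) (h1R : (1 : G) ∉ R)
    (hC : cayAdj S * (cayAdj S)ᵀ = 1)
    (g h : G) (t : ℝ) (ht : 0 < t) (k : ℤ) (hk : t = (k : ℝ) * Real.pi)
    (hpst : pst (cayAdj R) g h t) :
    pst (scAdj R R S) (g, 0) (h, 0) t ∧ pst (scAdj R R S) (g, 1) (h, 1) t := by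
  set A := cayAdj R with hA
  set Q := qMat S with hQdef
  set c : ℂ := -(Complex.I * (t : ℂ)) with hc
  have hct : (t : ℂ) = (k : ℂ) * (Real.pi : ℂ) := by rw [hk]; push_cast; ring
  have hM : scAdj R R S = Matrix.blockDiagonal (fun _ : Fin 2 => A) + Q := scAdj_decomp R S
  have hQQ : Q * Q = 1 := qMat_sq S hC
  have hPQ : Commute (Matrix.blockDiagonal (fun _ : Fin 2 => A)) Q := blockDiag_comm_qMat R S
  -- exponential of the diagonal part
  have h1 : NormedSpace.exp (c • Matrix.blockDiagonal (fun _ : Fin 2 => A))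
      = Matrix.blockDiagonal (fun _ : Fin 2 => NormedSpace.exp (c • A)) := by
    letI : SeminormedRing (Matrix G G ℂ) := Matrix.linftyOpSemiNormedRing
    letI : NormedRing (Matrix G G ℂ) := Matrix.linftyOpNormedRing
    letI : NormedAlgebra ℂ (Matrix G G ℂ) := Matrix.linftyOpNormedAlgebra
    letI : NormedAlgebra ℚ (Matrix G G ℂ) := Matrix.linftyOpNormedAlgebra
    have hpi : NormedSpace.exp (c • (fun _ : Fin 2 => A))
        = fun _ : Fin 2 => NormedSpace.exp (c • A) := by
      funext i
      exact Pi.coe_exp (c • (fun _ : Fin 2 => A)) i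
    rw [← Matrix.blockDiagonal_smul, Matrix.exp_blockDiagonal, hpi]
  -- exponential of the off-diagonal part
  have h2 : NormedSpace.exp (c • Q) = ((-1 : ℂ) ^ k) • 1 := by
    set E : Matrix (G × Fin 2) (G × Fin 2) ℂ := (2⁻¹ : ℂ) • (1 + Q) with hEdef
    have h4 : (1 + Q) * (1 + Q) = (2 : ℂ) • (1 + Q) := by
      rw [mul_add, add_mul, add_mul, one_mul, one_mul, mul_one, hQQ]
      module
    have hEE : E * E = E := by
      rw [hEdef, smul_mul_smul_comm, h4, smul_smul]
      norm_num
    have hdecomp : c • Q = (2 * c) • E + (-c) • (1 : Matrix (G × Fin 2) (G × Fin 2) ℂ) := by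
      rw [hEdef, smul_smul]
      have : 2 * c * 2⁻¹ = c := by ring
      rw [this, smul_add]
      module
    have hcomm : Commute ((2 * c) • E) ((-c) • (1 : Matrix (G × Fin 2) (G × Fin 2) ℂ)) :=
      ((Commute.one_right E).smul_left _).smul_right _
    have hexp2c : Complex.exp (2 * c) = 1 := by
      have h2c : 2 * c = ((-k : ℤ) : ℂ) * (2 * (Real.pi : ℂ) * Complex.I) := by
        rw [hc, hct]; push_cast; ring
      rw [h2c, Complex.exp_int_mul_two_pi_mul_I]
    have hexpc : Complex.exp (-c) = (-1 : ℂ) ^ k := by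
      have hmc : -c = ((k : ℤ) : ℂ) * ((Real.pi : ℂ) * Complex.I) := by
        rw [hc, hct]; push_cast; ring
      rw [hmc, Complex.exp_int_mul, Complex.exp_pi_mul_I]
    rw [hdecomp, Matrix.exp_add_of_commute _ _ hcomm, exp_smul_idem _ _ hEE, exp_smul_one',
      hexp2c, hexpc]
    simp
  -- the full transfer matrix
  have key : transfer (scAdj R R S) t
      = ((-1 : ℂ) ^ k) • Matrix.blockDiagonal (fun _ : Fin 2 => NormedSpace.exp (c • A)) := by
    rw [transfer, hM, ← hc, smul_add,
      Matrix.exp_add_of_commute _ _ ((hPQ.smul_left c).smul_right c), h1, h2,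
      mul_smul_comm, mul_one]
  have habs : ‖((-1 : ℂ) ^ k)‖ = 1 := by
    rw [norm_zpow]; simp
  have hAg : ‖(NormedSpace.exp (c • A) g h)‖ = 1 := by
    rw [pst, transfer, ← hc] at hpst
    exact hpst
  constructor
  · rw [pst, key]
    rw [Matrix.smul_apply, Matrix.blockDiagonal_apply_eq, smul_eq_mul, norm_mul, habs, one_mul]
    exact hAg
  · rw [pst, key]
    rw [Matrix.smul_apply, Matrix.blockDiagonal_apply_eq, smul_eq_mul, norm_mul, habs, one_mul]
    exact hAg

end
end

section
/- Let G be a finite group having an abelian subgroup H of index 2, write G = H ∪ xH for some x ∉ H, and let T ⊆ G be inverse-closed with 1 ∉ T; write T = T₁ ∪ xT₂ with T₁, T₂ ⊆ H. Let Irr(H) = {χ₁, …, χₙ} where n = |H|. Then the multiset of eigenvalues of the adjacency matrix of Cay(G,T) equals {λᵢ⁺, λᵢ⁻ : i = 1, …, n}, where λᵢ⁺ = (χᵢ(T₁) + χᵢ(xT₁x⁻¹) + √((χᵢ(T₁) − χᵢ(xT₁x⁻¹))² + 4|χᵢ(x²T₂)|²))/2 and λᵢ⁻ = (χᵢ(T₁)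 + χᵢ(xT₁x⁻¹) − √((χᵢ(T₁) − χᵢ(xT₁x⁻¹))² + 4|χᵢ(x²T₂)|²))/2. -/
open scoped Classical Pointwise
open Complex Finset Matrix

noncomputable section

section
namespace Stmt8
open Polynomial

variable {K : Type*} [CommGroup K] [Fintype K]

lemma char_abs_one (χ : K →* ℂ) (h : K) : ‖χ h‖ = 1 := by
  have hp : χ h ^ Fintype.card K = 1 := by
    rw [← _root_.map_pow, pow_card_eq_one, _root_.map_one]
  have h1 : ‖χ h‖ ^ Fintype.card K = 1 := by
    rw [← norm_pow, hp, norm_one]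
  have hn : Fintype.card K ≠ 0 := Fintype.card_ne_zero
  have h0 : (0:ℝ) ≤ ‖χ h‖ := norm_nonneg _
  rcases lt_trichotomy (‖χ h‖) 1 with hlt | heq | hgt
  · exact absurd h1 (by have := pow_lt_one₀ h0 hlt hn; linarith)
  · exact heq
  · exact absurd h1 (by have := one_lt_pow₀ hgt hn; linarith)

lemma char_mul_conj (χ : K →* ℂ) (h : K) : χ h * (starRingEnd ℂ) (χ h) = 1 := by
  rw [Complex.mul_conj, ← Complex.sq_norm, char_abs_one]
  norm_num

lemma char_ne_zero (χ : K →* ℂ) (h : K) : χ h ≠ 0 := by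
  intro h0
  have := char_mul_conj χ h
  rw [h0, zero_mul] at this
  exact zero_ne_one this

lemma char_inv (χ : K →* ℂ) (h : K) : χ h⁻¹ = (starRingEnd ℂ) (χ h) := by
  have h1 : χ h * χ h⁻¹ = 1 := by rw [← _root_.map_mul, mul_inv_cancel, _root_.map_one]
  rw [← inv_eq_of_mul_eq_one_right h1, ← inv_eq_of_mul_eq_one_right (char_mul_conj χ h)]

lemma sum_char_eq_zero {φ : K →* ℂ} (hφ : ∃ g, φ g ≠ 1) : ∑ h : K, φ h = 0 := by
  obtain ⟨g, hg⟩ := hφ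
  have h1 : ∑ h : K, φ (g * h) = ∑ h : K, φ h :=
    Fintype.sum_equiv (Equiv.mulLeft g) _ _ (fun h => by simp)
  have h2 : φ g * ∑ h : K, φ h = ∑ h : K, φ h := by
    rw [Finset.mul_sum, ← h1]
    exact Finset.sum_congr rfl (fun h _ => (_root_.map_mul φ g h).symm)
  by_contra hS
  exact hg (mul_right_cancel₀ hS (by rw [h2, one_mul]))

lemma char_orthogonality (χ φ : K →* ℂ) :
    ∑ h : K, χ h * (starRingEnd ℂ) (φ h) =
      if χ = φ then (Fintype.card K : ℂ) else 0 := by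
  split_ifs with he
  · subst he
    simp only [char_mul_conj]
    simp [Finset.card_univ]
  · set ρ : K →* ℂ :=
      { toFun := fun h => χ h * (starRingEnd ℂ) (φ h)
        map_one' := by simp
        map_mul' := fun a b => by
          simp only [_root_.map_mul]; ring } with hρ
    have : ∃ g, ρ g ≠ 1 := by
      by_contra hall
      push_neg at hall
      apply he
      ext h
      have h1 : χ h * (starRingEnd ℂ) (φ h) = 1 := hall h
      have h2 := char_mul_conj φ h
      have h3 : (starRingEnd ℂ) (φ h) ≠ 0 := by
        intro h0; rw [h0, mul_zero] at h2; exact zero_ne_one h2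
      exact mul_right_cancel₀ h3 (h1.trans h2.symm)
    exact sum_char_eq_zero this

lemma card_monoidHom_complex [Fintype (K →* ℂ)] : Fintype.card (K →* ℂ) = Fintype.card K := by
  have e1 : (K →* ℂ) ≃ (K →* ℂˣ) :=
    { toFun := MonoidHom.toHomUnits
      invFun := fun f => (Units.coeHom ℂ).comp f
      left_inv := fun f => by ext h; simp
      right_inv := fun f =>
        MonoidHom.ext fun h => Units.ext (MonoidHom.coe_toHomUnits _ h) }
  haveI : NeZero (Monoid.exponent K) :=
    ⟨Monoid.exponent_ne_zero.mpr (Monoid.ExponentExists.of_finite)⟩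
  obtain ⟨e2⟩ := CommGroup.monoidHom_mulEquiv_of_hasEnoughRootsOfUnity K ℂ
  exact Fintype.card_congr (e1.trans e2.toEquiv)




lemma charmatrix_eq {R : Type*} [CommRing R] {n : Type*} [DecidableEq n] [Fintype n]
    (M : Matrix n n R) : charmatrix M = (X : R[X]) • (1 : Matrix n n R[X]) - M.map C := by
  ext i j
  by_cases h : i = j <;>
    simp [charmatrix_apply, Matrix.smul_apply, Matrix.one_apply, Matrix.diagonal_apply, h,
      Matrix.map_apply]

lemma charpoly_blockDiagonal {R : Type*} [CommRing R] {m o : Type*}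
    [DecidableEq m] [Fintype m] [DecidableEq o] [Fintype o]
    (M : o → Matrix m m R) :
    (Matrix.blockDiagonal M).charpoly = ∏ k : o, (M k).charpoly := by
  have h : charmatrix (Matrix.blockDiagonal M)
      = Matrix.blockDiagonal (fun k => charmatrix (M k)) := by
    rw [charmatrix_eq]
    have h1 : (Matrix.blockDiagonal M).map (C : R →+* R[X]) =
        Matrix.blockDiagonal (fun k => (M k).map C) := by
      ext ⟨i, k⟩ ⟨j, k'⟩
      by_cases hk : k = k' <;>
        simp [Matrix.blockDiagonal_apply, Matrix.map_apply, hk]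
    rw [h1]
    ext ⟨i, k⟩ ⟨j, k'⟩
    by_cases hk : k = k' <;>
      simp [Matrix.blockDiagonal_apply, charmatrix_eq, Matrix.smul_apply, Matrix.one_apply,
        Matrix.sub_apply, Matrix.map_apply, Prod.ext_iff, hk]
  rw [Matrix.charpoly, h, Matrix.det_blockDiagonal]
  rfl

lemma charpoly_of_conj {n : Type*} [DecidableEq n] [Fintype n]
    (U A B : Matrix n n ℂ) (hU : U * A = B * U) (hdet : U.det ≠ 0) :
    A.charpoly = B.charpoly := by
  have key : U.map C * charmatrix A = charmatrix B * U.map C := by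
    rw [charmatrix_eq, charmatrix_eq, Matrix.mul_sub, Matrix.sub_mul,
      Matrix.mul_smul, Matrix.mul_one, Matrix.smul_mul, Matrix.one_mul,
      ← Matrix.map_mul, ← Matrix.map_mul, hU]
  have hdetmap : (U.map C).det = C U.det := (RingHom.map_det C U).symm
  have h2 := congrArg Matrix.det key
  rw [Matrix.det_mul, Matrix.det_mul, hdetmap] at h2
  have hC : (C U.det : ℂ[X]) ≠ 0 := by
    simpa using hdet
  rw [Matrix.charpoly, Matrix.charpoly]
  rw [mul_comm (C U.det)] at h2
  exact mul_right_cancel₀ hC h2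

lemma charpoly_two (a b : ℝ) (s : ℂ)
    (M : Matrix (Fin 2) (Fin 2) ℂ)
    (hM : M = !![(a : ℂ), (starRingEnd ℂ) s; s, (b : ℂ)]) :
    M.charpoly =
      (X - C (((a + b + Real.sqrt ((a - b) ^ 2 + 4 * ‖s‖ ^ 2)) / 2 : ℝ) : ℂ)) *
      (X - C (((a + b - Real.sqrt ((a - b) ^ 2 + 4 * ‖s‖ ^ 2)) / 2 : ℝ) : ℂ)) := by
  subst hM
  set D : ℝ := (a - b) ^ 2 + 4 * ‖s‖ ^ 2 with hD
  have hD0 : 0 ≤ D := by positivity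
  have hsq : Real.sqrt D * Real.sqrt D = D := Real.mul_self_sqrt hD0
  have hcs : (starRingEnd ℂ) s * s = ((‖s‖ ^ 2 : ℝ) : ℂ) := by
    rw [mul_comm, Complex.mul_conj, ← Complex.sq_norm]
  set p : ℝ := (a + b + Real.sqrt D) / 2 with hp
  set q : ℝ := (a + b - Real.sqrt D) / 2 with hq
  have hsum : p + q = a + b := by rw [hp, hq]; ring
  have hprod : p * q = a * b - ‖s‖ ^ 2 := by
    have h' : p * q = ((a + b) ^ 2 - Real.sqrt D * Real.sqrt D) / 4 := by rw [hp, hq]; ring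
    rw [h', hsq, hD]; ring
  rw [Matrix.charpoly, Matrix.det_fin_two]
  simp only [charmatrix_apply, Matrix.diagonal_apply, Matrix.cons_val', Matrix.cons_val_zero,
    Matrix.cons_val_one, Matrix.head_cons, Matrix.empty_val', Matrix.cons_val_fin_one,
    Matrix.head_fin_const, Matrix.of_apply]
  norm_num
  have h1 : C ((p : ℂ)) + C ((q : ℂ)) = C ((a : ℂ)) + C ((b : ℂ)) := by
    rw [← C_add, ← C_add, ← Complex.ofReal_add, ← Complex.ofReal_add, hsum]
  have hc : (p : ℂ) * (q : ℂ) = (a : ℂ) * (b : ℂ) - ((‖s‖ ^ 2 : ℝ) : ℂ) := by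
    exact_mod_cast congrArg (fun r : ℝ => (r : ℂ)) hprod
  have h2 : C ((p : ℂ)) * C ((q : ℂ)) =
      C ((a : ℂ)) * C ((b : ℂ)) - C ((starRingEnd ℂ) s) * C s :=
    calc C ((p : ℂ)) * C ((q : ℂ)) = C ((p : ℂ) * (q : ℂ)) := (C_mul).symm
      _ = C ((a : ℂ) * (b : ℂ) - (starRingEnd ℂ) s * s) := by rw [hc, hcs]
      _ = C ((a : ℂ) * (b : ℂ)) - C ((starRingEnd ℂ) s * s) := by rw [map_sub]
      _ = C ((a : ℂ)) * C ((b : ℂ)) - C ((starRingEnd ℂ) s) * C s := by rw [C_mul, C_mul]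
  linear_combination (X : ℂ[X]) * h1 - h2



lemma sum_ite_equiv {K : Type*} [Fintype K] {β : Type*} [AddCommMonoid β]
    (e : K ≃ K) (P : K → Prop) [DecidablePred P] (f : K → β) (S : Finset K)
    (hPe : ∀ t, P (e t) ↔ t ∈ S) :
    ∑ h : K, (if P h then f h else 0) = ∑ t ∈ S, f (e t) := by
  rw [← Equiv.sum_comp e (fun h => if P h then f h else 0)]
  have key : ∀ t : K, (if P (e t) then f (e t) else 0) = (if t ∈ S then f (e t) else 0) := by
    intro t
    by_cases h : t ∈ S
    · rw [if_pos h, if_pos ((hPe t).mpr h)]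
    · rw [if_neg h, if_neg (fun hP => h ((hPe t).mp hP))]
  rw [Finset.sum_congr rfl (fun t _ => key t), Finset.sum_ite_mem, Finset.univ_inter]

end Stmt8
end
open Polynomial

/-- Eigenvalues of a Cayley graph over a group with an abelian subgroup `H`
of index `2`, expressed via the characteristic polynomial. -/
theorem cayley_index_two_eigenvalues
    {G : Type*} [Group G] [Fintype G] [DecidableEq G]
    (H : Subgroup G) (hidx : H.index = 2)
    (hab : ∀ a ∈ H, ∀ b ∈ H, a * b = b * a)
    (x : G) (hx : x ∉ H) (hx2 : x * x ∈ H)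
    (T₁ T₂ : Finset ↥H)
    (c : ↥H → ↥H) (hc : ∀ a : ↥H, ((c a : G)) = x * (a : G) * x⁻¹)
    (T : Finset G)
    (hT : T = T₁.image (fun a : ↥H => (a : G)) ∪ T₂.image (fun a : ↥H => x * (a : G)))
    (hTinv : T⁻¹ = T) (h1T : (1 : G) ∉ T)
    [Fintype (↥H →* ℂ)] :
    (cayAdj T).charpoly =
      ∏ χ : ↥H →* ℂ,
        ((Polynomial.X - Polynomial.C (((((∑ a ∈ T₁, χ a).re + (∑ a ∈ T₁, χ (c a)).re +
              Real.sqrt (((∑ a ∈ T₁, χ a).re - (∑ a ∈ T₁, χ (c a)).re) ^ 2 +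
                4 * ‖∑ a ∈ T₂, χ ((⟨x * x, hx2⟩ : ↥H) * a)‖ ^ 2)) / 2 : ℝ) : ℂ))) *
         (Polynomial.X - Polynomial.C (((((∑ a ∈ T₁, χ a).re + (∑ a ∈ T₁, χ (c a)).re -
              Real.sqrt (((∑ a ∈ T₁, χ a).re - (∑ a ∈ T₁, χ (c a)).re) ^ 2 +
                4 * ‖∑ a ∈ T₂, χ ((⟨x * x, hx2⟩ : ↥H) * a)‖ ^ 2)) / 2 : ℝ) : ℂ)))) := by
  letI : CommGroup ↥H :=
    { (inferInstance : Group ↥H) with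
      mul_comm := fun a b => Subtype.ext (hab a a.2 b b.2) }
  classical
  -- membership facts
  have memT_coe : ∀ b : ↥H, (b : G) ∈ T ↔ b ∈ T₁ := by
    intro b
    constructor
    · intro hb
      rw [hT, Finset.mem_union] at hb
      rcases hb with hb | hb
      · obtain ⟨a, ha, hab'⟩ := Finset.mem_image.mp hb
        rwa [show a = b from Subtype.ext hab'] at ha
      · obtain ⟨a, _, hab'⟩ := Finset.mem_image.mp hb
        exact absurd (show x ∈ H by
          have hxe : x = (b : G) * (a : G)⁻¹ := by rw [← hab']; group
          rw [hxe]; exact H.mul_mem b.2 (H.inv_mem a.2)) hx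
    · intro hb
      rw [hT, Finset.mem_union]
      exact Or.inl (Finset.mem_image.mpr ⟨b, hb, rfl⟩)
  have memT_x : ∀ b : ↥H, x * (b : G) ∈ T ↔ b ∈ T₂ := by
    intro b
    constructor
    · intro hb
      rw [hT, Finset.mem_union] at hb
      rcases hb with hb | hb
      · obtain ⟨a, _, hab'⟩ := Finset.mem_image.mp hb
        exact absurd (show x ∈ H by
          have hxe : x = (a : G) * (b : G)⁻¹ := by rw [hab']; group
          rw [hxe]; exact H.mul_mem a.2 (H.inv_mem b.2)) hx
      · obtain ⟨a, ha, hab'⟩ := Finset.mem_image.mp hb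
        rwa [show a = b from Subtype.ext (mul_left_cancel hab')] at ha
    · intro hb
      rw [hT, Finset.mem_union]
      exact Or.inr (Finset.mem_image.mpr ⟨b, hb, rfl⟩)
  have hTmem : ∀ g : G, g ∈ T ↔ g⁻¹ ∈ T := by
    intro g
    constructor
    · intro hg; exact hTinv ▸ Finset.inv_mem_inv hg
    · intro hg
      have := hTinv ▸ Finset.inv_mem_inv hg
      simpa using this
  have T₁inv : ∀ a : ↥H, a ∈ T₁ → a⁻¹ ∈ T₁ := by
    intro a ha
    have h2 : (a : G)⁻¹ ∈ T := (hTmem _).mp ((memT_coe a).mpr ha)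
    exact (memT_coe a⁻¹).mp (by simpa using h2)
  have cc : ∀ a : ↥H, c (c a) = a := by
    intro a
    apply Subtype.ext
    calc ((c (c a) : ↥H) : G) = (x * x) * (a : G) * (x * x)⁻¹ := by rw [hc, hc]; group
      _ = (a : G) := by rw [hab (x * x) hx2 (a : G) a.2]; group
  have cinv : ∀ a : ↥H, c a⁻¹ = (c a)⁻¹ := by
    intro a
    apply Subtype.ext
    push_cast [hc]
    group
  -- the equivalence  ↥H × Fin 2 ≃ G
  set em : ↥H × Fin 2 → G := fun p => (if p.2 = 0 then 1 else x) * (p.1 : G) with hem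
  have hem0 : ∀ h : ↥H, em (h, 0) = (h : G) := fun h => by simp [hem]
  have hem1 : ∀ h : ↥H, em (h, 1) = x * (h : G) := fun h => by simp [hem]
  have htwo : ∀ j : Fin 2, j = 0 ∨ j = 1 := by decide
  have hinj : Function.Injective em := by
    rintro ⟨h, i⟩ ⟨h', i'⟩ heq
    rcases htwo i with rfl | rfl <;> rcases htwo i' with rfl | rfl
    · rw [hem0, hem0] at heq
      simp only [Prod.mk.injEq]
      exact ⟨Subtype.ext heq, trivial⟩
    · rw [hem0, hem1] at heq
      exact absurd (show x ∈ H by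
        rw [show x = (h : G) * (h' : G)⁻¹ from by rw [heq]; group]
        exact H.mul_mem h.2 (H.inv_mem h'.2)) hx
    · rw [hem1, hem0] at heq
      exact absurd (show x ∈ H by
        rw [show x = (h' : G) * (h : G)⁻¹ from by rw [← heq]; group]
        exact H.mul_mem h'.2 (H.inv_mem h.2)) hx
    · rw [hem1, hem1] at heq
      simp only [Prod.mk.injEq]
      exact ⟨Subtype.ext (mul_left_cancel heq), trivial⟩
  have hsurj : Function.Surjective em := by
    intro g
    by_cases hg : g ∈ H
    · exact ⟨(⟨g, hg⟩, 0), by simp [hem]⟩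
    · have hxg : x⁻¹ * g ∈ H :=
        (Subgroup.mul_mem_iff_of_index_two hidx).mpr
          (iff_of_false (fun hxi => hx (by simpa using H.inv_mem hxi)) hg)
      exact ⟨(⟨x⁻¹ * g, hxg⟩, 1), by simp [hem]⟩
  set e : (↥H × Fin 2) ≃ G := Equiv.ofBijective em ⟨hinj, hsurj⟩ with he
  set B : Matrix (↥H × Fin 2) (↥H × Fin 2) ℂ := (cayAdj T).submatrix e e with hB
  have hBchar : B.charpoly = (cayAdj T).charpoly := by
    have hre : B = (Matrix.reindex e.symm e.symm) (cayAdj T) := by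
      ext p q
      simp [hB, Matrix.reindex_apply, Matrix.submatrix_apply]
    rw [hre, Matrix.charpoly_reindex]
  have hBent : ∀ (h h₀ : ↥H) (i j : Fin 2),
      B (h, i) (h₀, j) = if em (h₀, j) * (em (h, i))⁻¹ ∈ T then (1 : ℂ) else 0 := by
    intro h h₀ i j
    by_cases hm : em (h₀, j) * (em (h, i))⁻¹ ∈ T
    · rw [if_pos hm]
      exact if_pos hm
    · rw [if_neg hm]
      exact if_neg hm
  -- the four block sums
  have hB00 : ∀ (χ : ↥H →* ℂ) (h₀ : ↥H),
      (∑ h : ↥H, χ h * B (h, 0) (h₀, 0)) = (starRingEnd ℂ) (∑ a ∈ T₁, χ a) * χ h₀ := by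
    intro χ h₀
    have step1 : ∀ h : ↥H, χ h * B (h, 0) (h₀, 0) = if h₀ * h⁻¹ ∈ T₁ then χ h else 0 := by
      intro h
      rw [hBent, hem0, hem0]
      have hmem : ((h₀ : G) * (h : G)⁻¹ ∈ T) ↔ (h₀ * h⁻¹ ∈ T₁) := by
        rw [show (h₀ : G) * (h : G)⁻¹ = ((h₀ * h⁻¹ : ↥H) : G) from by push_cast; group]
        exact memT_coe _
      simp only [mul_ite, mul_one, mul_zero]
      exact if_congr hmem rfl rfl
    rw [Finset.sum_congr rfl (fun h _ => step1 h)]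
    rw [Stmt8.sum_ite_equiv ((Equiv.inv ↥H).trans (Equiv.mulRight h₀))
      (fun t => h₀ * t⁻¹ ∈ T₁) χ T₁
      (fun t => by
        simp only [Equiv.trans_apply, Equiv.inv_apply, Equiv.coe_mulRight]
        rw [show h₀ * (t⁻¹ * h₀)⁻¹ = t from by group])]
    rw [map_sum, Finset.sum_mul]
    refine Finset.sum_congr rfl (fun t _ => ?_)
    simp only [Equiv.trans_apply, Equiv.inv_apply, Equiv.coe_mulRight]
    rw [_root_.map_mul, Stmt8.char_inv]
  have hB01 : ∀ (χ : ↥H →* ℂ) (h₀ : ↥H),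
      (∑ h : ↥H, χ h * B (h, 0) (h₀, 1)) = (starRingEnd ℂ) (∑ a ∈ T₂, χ a) * χ h₀ := by
    intro χ h₀
    have step1 : ∀ h : ↥H, χ h * B (h, 0) (h₀, 1) = if h₀ * h⁻¹ ∈ T₂ then χ h else 0 := by
      intro h
      rw [hBent, hem1, hem0]
      have hmem : (x * (h₀ : G) * (h : G)⁻¹ ∈ T) ↔ (h₀ * h⁻¹ ∈ T₂) := by
        rw [show x * (h₀ : G) * (h : G)⁻¹ = x * ((h₀ * h⁻¹ : ↥H) : G) from by push_cast; group]
        exact memT_x _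
      simp only [mul_ite, mul_one, mul_zero]
      exact if_congr hmem rfl rfl
    rw [Finset.sum_congr rfl (fun h _ => step1 h)]
    rw [Stmt8.sum_ite_equiv ((Equiv.inv ↥H).trans (Equiv.mulRight h₀))
      (fun t => h₀ * t⁻¹ ∈ T₂) χ T₂
      (fun t => by
        simp only [Equiv.trans_apply, Equiv.inv_apply, Equiv.coe_mulRight]
        rw [show h₀ * (t⁻¹ * h₀)⁻¹ = t from by group])]
    rw [map_sum, Finset.sum_mul]
    refine Finset.sum_congr rfl (fun t _ => ?_)
    simp only [Equiv.trans_apply, Equiv.inv_apply, Equiv.coe_mulRight]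
    rw [_root_.map_mul, Stmt8.char_inv]
  have hB10 : ∀ (χ : ↥H →* ℂ) (h₀ : ↥H),
      (∑ h : ↥H, χ h * B (h, 1) (h₀, 0)) = (∑ a ∈ T₂, χ a) * χ h₀ := by
    intro χ h₀
    have step1 : ∀ h : ↥H, χ h * B (h, 1) (h₀, 0) = if h * h₀⁻¹ ∈ T₂ then χ h else 0 := by
      intro h
      rw [hBent, hem0, hem1]
      have hmem : ((h₀ : G) * (x * (h : G))⁻¹ ∈ T) ↔ (h * h₀⁻¹ ∈ T₂) := by
        rw [hTmem, show ((h₀ : G) * (x * (h : G))⁻¹)⁻¹ = x * ((h * h₀⁻¹ : ↥H) : G) from by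
          push_cast; group]
        exact memT_x _
      simp only [mul_ite, mul_one, mul_zero]
      exact if_congr hmem rfl rfl
    rw [Finset.sum_congr rfl (fun h _ => step1 h)]
    rw [Stmt8.sum_ite_equiv (Equiv.mulRight h₀)
      (fun t => t * h₀⁻¹ ∈ T₂) χ T₂
      (fun t => by
        simp only [Equiv.coe_mulRight]
        rw [show t * h₀ * h₀⁻¹ = t from by group])]
    rw [Finset.sum_mul]
    refine Finset.sum_congr rfl (fun t _ => ?_)
    simp only [Equiv.coe_mulRight]
    rw [_root_.map_mul]
  have hB11 : ∀ (χ : ↥H →* ℂ) (h₀ : ↥H),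
      (∑ h : ↥H, χ h * B (h, 1) (h₀, 1)) = (starRingEnd ℂ) (∑ a ∈ T₁, χ (c a)) * χ h₀ := by
    intro χ h₀
    have step1 : ∀ h : ↥H, χ h * B (h, 1) (h₀, 1) = if c (h₀ * h⁻¹) ∈ T₁ then χ h else 0 := by
      intro h
      rw [hBent, hem1, hem1]
      have hmem : (x * (h₀ : G) * (x * (h : G))⁻¹ ∈ T) ↔ (c (h₀ * h⁻¹) ∈ T₁) := by
        rw [show x * (h₀ : G) * (x * (h : G))⁻¹ = ((c (h₀ * h⁻¹) : ↥H) : G) from by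
          rw [hc]; push_cast; group]
        exact memT_coe _
      simp only [mul_ite, mul_one, mul_zero]
      exact if_congr hmem rfl rfl
    rw [Finset.sum_congr rfl (fun h _ => step1 h)]
    rw [Stmt8.sum_ite_equiv ((Function.Involutive.toPerm c cc).trans
        ((Equiv.inv ↥H).trans (Equiv.mulRight h₀)))
      (fun t => c (h₀ * t⁻¹) ∈ T₁) χ T₁
      (fun t => by
        simp only [Equiv.trans_apply, Equiv.inv_apply, Equiv.coe_mulRight,
          Function.Involutive.coe_toPerm]
        change c (h₀ * ((c t)⁻¹ * h₀)⁻¹) ∈ T₁ ↔ t ∈ T₁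
        rw [show h₀ * ((c t)⁻¹ * h₀)⁻¹ = c t from by group, cc])]
    rw [map_sum, Finset.sum_mul]
    refine Finset.sum_congr rfl (fun t _ => ?_)
    simp only [Equiv.trans_apply, Equiv.inv_apply, Equiv.coe_mulRight,
      Function.Involutive.coe_toPerm]
    rw [_root_.map_mul, Stmt8.char_inv]
    rfl
  -- Fourier side
  have hcard := Stmt8.card_monoidHom_complex (K := ↥H)
  set σ : (↥H →* ℂ) ≃ ↥H := Fintype.equivOfCardEq hcard with hσ
  set B' : Matrix ((↥H →* ℂ) × Fin 2) ((↥H →* ℂ) × Fin 2) ℂ :=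
    B.submatrix (Prod.map σ id) (Prod.map σ id) with hB'
  have hB'char : B'.charpoly = B.charpoly := by
    have hre : B' = (Matrix.reindex (Equiv.prodCongr σ (Equiv.refl (Fin 2))).symm
        (Equiv.prodCongr σ (Equiv.refl (Fin 2))).symm) B := by
      ext ⟨φ, i⟩ ⟨ψ, j⟩
      simp [hB', Matrix.reindex_apply, Matrix.submatrix_apply]
    rw [hre, Matrix.charpoly_reindex]
  set Mb : (↥H →* ℂ) → Matrix (Fin 2) (Fin 2) ℂ := fun χ =>
    !![(starRingEnd ℂ) (∑ a ∈ T₁, χ a), (starRingEnd ℂ) (∑ a ∈ T₂, χ a);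
       (∑ a ∈ T₂, χ a), (starRingEnd ℂ) (∑ a ∈ T₁, χ (c a))] with hMb
  set U : Matrix ((↥H →* ℂ) × Fin 2) ((↥H →* ℂ) × Fin 2) ℂ :=
    fun p q => if p.2 = q.2 then p.1 (σ q.1) else 0 with hU
  set Dm : Matrix ((↥H →* ℂ) × Fin 2) ((↥H →* ℂ) × Fin 2) ℂ :=
    fun p q => if p.1 = q.1 then Mb p.1 p.2 q.2 else 0 with hDm
  have hMbent : ∀ (χ : ↥H →* ℂ) (i j : Fin 2) (h₀ : ↥H),
      (∑ h : ↥H, χ h * B (h, i) (h₀, j)) = Mb χ i j * χ h₀ := by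
    intro χ i j h₀
    rcases htwo i with rfl | rfl <;> rcases htwo j with rfl | rfl
    · rw [hB00]
      congr 1
    · rw [hB01]
      congr 1
    · rw [hB10]
      congr 1
    · rw [hB11]
      congr 1
  have hUB : U * B' = Dm * U := by
    ext ⟨χ, i⟩ ⟨ψ, j⟩
    rw [Matrix.mul_apply, Matrix.mul_apply, Fintype.sum_prod_type, Fintype.sum_prod_type]
    have hL : ∀ φ : ↥H →* ℂ, (∑ k : Fin 2, U (χ, i) (φ, k) * B' (φ, k) (ψ, j))
        = χ (σ φ) * B (σ φ, i) (σ ψ, j) := by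
      intro φ
      have hterm : ∀ k : Fin 2, U (χ, i) (φ, k) * B' (φ, k) (ψ, j)
          = if i = k then χ (σ φ) * B (σ φ, k) (σ ψ, j) else 0 := by
        intro k
        by_cases hik : i = k <;> simp [hU, hB', hik]
      rw [Finset.sum_congr rfl (fun k _ => hterm k), Finset.sum_ite_eq]
      simp
    have hR : ∀ φ : ↥H →* ℂ, (∑ k : Fin 2, Dm (χ, i) (φ, k) * U (φ, k) (ψ, j))
        = if χ = φ then Mb χ i j * φ (σ ψ) else 0 := by
      intro φ
      have hterm : ∀ k : Fin 2, Dm (χ, i) (φ, k) * U (φ, k) (ψ, j)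
          = if k = j then (if χ = φ then Mb χ i k * φ (σ ψ) else 0) else 0 := by
        intro k
        by_cases h1 : k = j <;> by_cases h2 : χ = φ <;> simp [hU, hDm, h1, h2]
      rw [Finset.sum_congr rfl (fun k _ => hterm k), Finset.sum_ite_eq']
      simp
    rw [Finset.sum_congr rfl (fun φ _ => hL φ), Finset.sum_congr rfl (fun φ _ => hR φ),
      Finset.sum_ite_eq]
    simp only [Finset.mem_univ, if_true]
    rw [Equiv.sum_comp σ (fun h => χ h * B (h, i) (σ ψ, j))]
    exact hMbent χ i j (σ ψ)
  -- invertibility of U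
  set V : Matrix ((↥H →* ℂ) × Fin 2) ((↥H →* ℂ) × Fin 2) ℂ :=
    fun q p => if q.2 = p.2 then (starRingEnd ℂ) (p.1 (σ q.1)) else 0 with hV
  have hUV : U * V = ((Fintype.card ↥H : ℂ)) • (1 : Matrix ((↥H →* ℂ) × Fin 2) ((↥H →* ℂ) × Fin 2) ℂ) := by
    ext ⟨χ, i⟩ ⟨φ, k⟩
    rw [Matrix.mul_apply, Fintype.sum_prod_type]
    have hinner : ∀ ψ : ↥H →* ℂ, (∑ j : Fin 2, U (χ, i) (ψ, j) * V (ψ, j) (φ, k))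
        = if i = k then χ (σ ψ) * (starRingEnd ℂ) (φ (σ ψ)) else 0 := by
      intro ψ
      have hterm : ∀ j : Fin 2, U (χ, i) (ψ, j) * V (ψ, j) (φ, k)
          = if i = j then (if j = k then χ (σ ψ) * (starRingEnd ℂ) (φ (σ ψ)) else 0) else 0 := by
        intro j
        by_cases h1 : i = j <;> by_cases h2 : j = k <;> simp [hU, hV, h1, h2]
      rw [Finset.sum_congr rfl (fun j _ => hterm j), Finset.sum_ite_eq]
      simp
    rw [Finset.sum_congr rfl (fun ψ _ => hinner ψ)]
    by_cases hik : i = k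
    · have : (∑ ψ : ↥H →* ℂ, χ (σ ψ) * (starRingEnd ℂ) (φ (σ ψ)))
          = ∑ h : ↥H, χ h * (starRingEnd ℂ) (φ h) :=
        Equiv.sum_comp σ (fun h => χ h * (starRingEnd ℂ) (φ h))
      rw [show (∑ ψ : ↥H →* ℂ, if i = k then χ (σ ψ) * (starRingEnd ℂ) (φ (σ ψ)) else 0)
          = ∑ ψ : ↥H →* ℂ, χ (σ ψ) * (starRingEnd ℂ) (φ (σ ψ)) from
          Finset.sum_congr rfl (fun ψ _ => by rw [if_pos hik]), this,
        Stmt8.char_orthogonality]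
      by_cases hχφ : χ = φ
      · simp [hχφ, hik, Matrix.one_apply]
      · simp [hχφ, Matrix.one_apply, Prod.ext_iff]
    · simp only [hik, if_false]
      simp only [Finset.sum_const_zero]
      rw [Matrix.smul_apply, Matrix.one_apply_ne (by simp [Prod.ext_iff, hik])]
      simp
  have hdetU : U.det ≠ 0 := by
    intro h0
    have hdet := congrArg Matrix.det hUV
    rw [Matrix.det_mul, h0, zero_mul, Matrix.det_smul, Matrix.det_one, mul_one] at hdet
    have hne : ((Fintype.card ↥H : ℂ)) ^ (Fintype.card ((↥H →* ℂ) × Fin 2)) ≠ 0 :=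
      pow_ne_zero _ (Nat.cast_ne_zero.mpr Fintype.card_ne_zero)
    exact hne hdet.symm
  have hDchar : B'.charpoly = Dm.charpoly := Stmt8.charpoly_of_conj U B' Dm hUB hdetU
  have hDblock : Dm.charpoly = ∏ χ : ↥H →* ℂ, (Mb χ).charpoly := by
    have hD : Dm = (Matrix.blockDiagonal Mb).submatrix
        (Equiv.prodComm (↥H →* ℂ) (Fin 2)) (Equiv.prodComm (↥H →* ℂ) (Fin 2)) := by
      ext ⟨χ, i⟩ ⟨ψ, j⟩
      by_cases h : χ = ψ <;>
        simp [hDm, Matrix.blockDiagonal_apply, Equiv.prodComm_apply, h]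
    have hre : Dm = (Matrix.reindex (Equiv.prodComm (↥H →* ℂ) (Fin 2)).symm
        (Equiv.prodComm (↥H →* ℂ) (Fin 2)).symm) (Matrix.blockDiagonal Mb) := by
      rw [hD, Matrix.reindex_apply, Equiv.symm_symm]
    rw [hre, Matrix.charpoly_reindex, Stmt8.charpoly_blockDiagonal]
  -- realness and final factorization
  have hconj1 : ∀ χ : ↥H →* ℂ, (starRingEnd ℂ) (∑ a ∈ T₁, χ a) = ∑ a ∈ T₁, χ a := by
    intro χ
    rw [map_sum]
    rw [show (∑ a ∈ T₁, (starRingEnd ℂ) (χ a)) = ∑ a ∈ T₁, χ a⁻¹ from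
      Finset.sum_congr rfl (fun a _ => (Stmt8.char_inv χ a).symm)]
    exact Finset.sum_nbij' (fun a => a⁻¹) (fun a => a⁻¹)
      (fun a ha => T₁inv a ha) (fun a ha => T₁inv a ha)
      (fun a _ => inv_inv a) (fun a _ => inv_inv a)
      (fun a _ => rfl)
  have hconjc : ∀ χ : ↥H →* ℂ, (starRingEnd ℂ) (∑ a ∈ T₁, χ (c a)) = ∑ a ∈ T₁, χ (c a) := by
    intro χ
    rw [map_sum]
    rw [show (∑ a ∈ T₁, (starRingEnd ℂ) (χ (c a))) = ∑ a ∈ T₁, χ (c a⁻¹) from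
      Finset.sum_congr rfl (fun a _ => by rw [cinv, Stmt8.char_inv])]
    exact Finset.sum_nbij' (fun a => a⁻¹) (fun a => a⁻¹)
      (fun a ha => T₁inv a ha) (fun a ha => T₁inv a ha)
      (fun a _ => inv_inv a) (fun a _ => inv_inv a)
      (fun a _ => rfl)
  have habs : ∀ χ : ↥H →* ℂ,
      ‖∑ a ∈ T₂, χ ((⟨x * x, hx2⟩ : ↥H) * a)‖ = ‖∑ a ∈ T₂, χ a‖ := by
    intro χ
    rw [show (∑ a ∈ T₂, χ ((⟨x * x, hx2⟩ : ↥H) * a))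
        = χ (⟨x * x, hx2⟩ : ↥H) * ∑ a ∈ T₂, χ a from by
      rw [Finset.mul_sum]
      exact Finset.sum_congr rfl (fun a _ => _root_.map_mul χ _ _)]
    rw [norm_mul, Stmt8.char_abs_one, one_mul]
  have hfac : ∀ χ : ↥H →* ℂ, (Mb χ).charpoly =
      ((Polynomial.X - Polynomial.C (((((∑ a ∈ T₁, χ a).re + (∑ a ∈ T₁, χ (c a)).re +
              Real.sqrt (((∑ a ∈ T₁, χ a).re - (∑ a ∈ T₁, χ (c a)).re) ^ 2 +
                4 * ‖∑ a ∈ T₂, χ ((⟨x * x, hx2⟩ : ↥H) * a)‖ ^ 2)) / 2 : ℝ) : ℂ))) *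
         (Polynomial.X - Polynomial.C (((((∑ a ∈ T₁, χ a).re + (∑ a ∈ T₁, χ (c a)).re -
              Real.sqrt (((∑ a ∈ T₁, χ a).re - (∑ a ∈ T₁, χ (c a)).re) ^ 2 +
                4 * ‖∑ a ∈ T₂, χ ((⟨x * x, hx2⟩ : ↥H) * a)‖ ^ 2)) / 2 : ℝ) : ℂ)))) := by
    intro χ
    have hre1 : (starRingEnd ℂ) (∑ a ∈ T₁, χ a) = (((∑ a ∈ T₁, χ a).re : ℝ) : ℂ) :=
      (hconj1 χ).trans (Complex.conj_eq_iff_re.mp (hconj1 χ)).symm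
    have hrec : (starRingEnd ℂ) (∑ a ∈ T₁, χ (c a)) = (((∑ a ∈ T₁, χ (c a)).re : ℝ) : ℂ) :=
      (hconjc χ).trans (Complex.conj_eq_iff_re.mp (hconjc χ)).symm
    have hM : Mb χ = !![(((∑ a ∈ T₁, χ a).re : ℝ) : ℂ), (starRingEnd ℂ) (∑ a ∈ T₂, χ a);
        (∑ a ∈ T₂, χ a), (((∑ a ∈ T₁, χ (c a)).re : ℝ) : ℂ)] := by
      simp only [hMb]
      rw [hre1, hrec]
    have := Stmt8.charpoly_two ((∑ a ∈ T₁, χ a).re) ((∑ a ∈ T₁, χ (c a)).re)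
      (∑ a ∈ T₂, χ a) (Mb χ) hM
    rw [this, habs]
  calc (cayAdj T).charpoly = B.charpoly := hBchar.symm
    _ = B'.charpoly := hB'char.symm
    _ = Dm.charpoly := hDchar
    _ = ∏ χ : ↥H →* ℂ, (Mb χ).charpoly := hDblock
    _ = _ := Finset.prod_congr rfl (fun χ _ => hfac χ)


end
end

section
/- Let G be a finite abelian group, R, L, S ⊆ G with R = R⁻¹, L = L⁻¹, 1 ∉ R ∪ L, and let Γ = SC(G,R,L,S). If Γ has perfect state transfer between two distinct vertices (g,r) and (h,r) (same second coordinate), then a = g⁻¹h has order 2 in G. In particular, if G has odd order then Γ has no perfect state transfer between any two distinct vertices of the form (g,r) and (h,r). -/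
open scoped Classical Pointwise
open Complex Finset Matrix

noncomputable section

section Aux

variable {G : Type*} [CommGroup G] [Fintype G] [DecidableEq G]

private lemma mem_of_symm {R : Finset G} (hR : R⁻¹ = R) (a b : G) :
    a * b⁻¹ ∈ R ↔ b * a⁻¹ ∈ R := by
  conv_lhs => rw [← hR]
  rw [Finset.mem_inv']
  simp [_root_.mul_inv_rev]

private lemma scAdj_symm (R L S : Finset G) (hR : R⁻¹ = R) (hL : L⁻¹ = L)
    (u v : G × Fin 2) : scAdj R L S u v = scAdj R L S v u := by
  obtain ⟨x, i⟩ := u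
  obtain ⟨y, j⟩ := v
  unfold scAdj
  fin_cases i <;> fin_cases j <;>
    simp [mem_of_symm hR, mem_of_symm hL]

private lemma scAdj_real (R L S : Finset G) (u v : G × Fin 2) :
    star (scAdj R L S u v) = scAdj R L S u v := by
  unfold scAdj
  split_ifs <;> simp

private lemma scAdj_herm (R L S : Finset G) (hR : R⁻¹ = R) (hL : L⁻¹ = L) :
    (scAdj R L S)ᴴ = scAdj R L S := by
  ext u v
  rw [Matrix.conjTranspose_apply, scAdj_symm R L S hR hL, scAdj_real]

private lemma scAdj_transpose (R L S : Finset G) (hR : R⁻¹ = R) (hL : L⁻¹ = L) :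
    (scAdj R L S)ᵀ = scAdj R L S := by
  ext u v
  rw [Matrix.transpose_apply, scAdj_symm R L S hR hL]

private lemma transfer_unitary {V : Type*} [Fintype V] [DecidableEq V]
    (A : Matrix V V ℂ) (hA : Aᴴ = A) (t : ℝ) :
    transfer A t * (transfer A t)ᴴ = 1 := by
  unfold transfer
  rw [← Matrix.exp_conjTranspose]
  have hct : ((-(Complex.I * (t : ℂ))) • A)ᴴ = (Complex.I * (t : ℂ)) • A := by
    rw [Matrix.conjTranspose_smul, hA]
    congr 1
    simp [Complex.ext_iff]
  rw [hct, ← Matrix.exp_add_of_commute]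
  · have : (-(Complex.I * (t : ℂ))) • A + (Complex.I * (t : ℂ)) • A = 0 := by
      rw [← add_smul]; simp
    rw [this, NormedSpace.exp_zero]
  · exact ((Commute.refl A).smul_left _).smul_right _

private lemma transfer_row {V : Type*} [Fintype V] [DecidableEq V]
    (A : Matrix V V ℂ) (hA : Aᴴ = A) (t : ℝ) (u : V) :
    ∑ x : V, Complex.normSq (transfer A t u x) = 1 := by
  have h := congrFun (congrFun (transfer_unitary A hA t) u) u
  rw [Matrix.mul_apply, Matrix.one_apply_eq] at h
  have h1 : ((∑ x : V, Complex.normSq (transfer A t u x) : ℝ) : ℂ) = 1 := by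
    push_cast
    rw [← h]
    refine Finset.sum_congr rfl fun x _ => ?_
    rw [Matrix.conjTranspose_apply]
    exact (Complex.mul_conj _).symm
  have h2 : ((1 : ℝ) : ℂ) = 1 := by norm_num
  exact_mod_cast h1.trans h2.symm

private lemma no_two_entries {V : Type*} [Fintype V] [DecidableEq V]
    (A : Matrix V V ℂ) (hA : Aᴴ = A) (t : ℝ) (u v w : V) (hvw : v ≠ w)
    (h1 : ‖transfer A t u v‖ = 1)
    (h2 : ‖transfer A t u w‖ = 1) : False := by
  have hrow := transfer_row A hA t u
  have hle : Complex.normSq (transfer A t u v) + Complex.normSq (transfer A t u w) ≤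
      ∑ x : V, Complex.normSq (transfer A t u x) := by
    have hp := Finset.sum_pair (f := fun x => Complex.normSq (transfer A t u x)) hvw
    rw [← hp]
    exact Finset.sum_le_sum_of_subset_of_nonneg (Finset.subset_univ _)
      (fun _ _ _ => Complex.normSq_nonneg _)
  have hv : Complex.normSq (transfer A t u v) = 1 := by
    rw [← Complex.sq_norm, h1]; norm_num
  have hw : Complex.normSq (transfer A t u w) = 1 := by
    rw [← Complex.sq_norm, h2]; norm_num
  rw [hv, hw, hrow] at hle
  norm_num at hle

private lemma exp_reindex {V : Type*} [Fintype V] [DecidableEq V]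
    (e : V ≃ V) (M : Matrix V V ℂ) :
    NormedSpace.exp (Matrix.reindexAlgEquiv ℂ ℂ e M) =
      Matrix.reindexAlgEquiv ℂ ℂ e (NormedSpace.exp M) := by
  letI : SeminormedRing (Matrix V V ℂ) := Matrix.linftyOpSemiNormedRing
  letI : NormedRing (Matrix V V ℂ) := Matrix.linftyOpNormedRing
  letI : NormedAlgebra ℂ (Matrix V V ℂ) := Matrix.linftyOpNormedAlgebra
  letI : NormedAlgebra ℚ (Matrix V V ℂ) := NormedAlgebra.restrictScalars ℚ ℂ (Matrix V V ℂ)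
  have hcont : Continuous (Matrix.reindexAlgEquiv ℂ ℂ e) :=
    LinearMap.continuous_of_finiteDimensional
      ((Matrix.reindexAlgEquiv ℂ ℂ e).toLinearEquiv.toLinearMap)
  exact (NormedSpace.map_exp (Matrix.reindexAlgEquiv ℂ ℂ e) hcont M).symm

private lemma transfer_shift (R L S : Finset G) (c x y : G) (i j : Fin 2) (t : ℝ) :
    transfer (scAdj R L S) t (c * x, i) (c * y, j) =
      transfer (scAdj R L S) t (x, i) (y, j) := by
  set e : (G × Fin 2) ≃ (G × Fin 2) := (Equiv.mulLeft c).prodCongr (Equiv.refl (Fin 2)) with he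
  have hAe : Matrix.reindexAlgEquiv ℂ ℂ e (scAdj R L S) = scAdj R L S := by
    ext ⟨p, i'⟩ ⟨q, j'⟩
    rw [Matrix.reindexAlgEquiv_apply, Matrix.reindex_apply, Matrix.submatrix_apply]
    have hsym : e.symm (p, i') = (c⁻¹ * p, i') := rfl
    have hsym2 : e.symm (q, j') = (c⁻¹ * q, j') := rfl
    rw [hsym, hsym2]
    unfold scAdj
    have e1 : (c⁻¹ * q) * (c⁻¹ * p)⁻¹ = q * p⁻¹ := by
      rw [_root_.mul_inv_rev, inv_inv]
      rw [mul_comm p⁻¹ c, mul_mul_mul_comm, inv_mul_cancel, one_mul]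
    have e2 : (c⁻¹ * p) * (c⁻¹ * q)⁻¹ = p * q⁻¹ := by
      rw [_root_.mul_inv_rev, inv_inv]
      rw [mul_comm q⁻¹ c, mul_mul_mul_comm, inv_mul_cancel, one_mul]
    simp only [e1, e2]
    split_ifs <;> rfl
  have hTe : Matrix.reindexAlgEquiv ℂ ℂ e (transfer (scAdj R L S) t) =
      transfer (scAdj R L S) t := by
    unfold transfer
    rw [← exp_reindex, _root_.map_smul, hAe]
  have := congrFun (congrFun hTe (c * x, i)) (c * y, j)
  rw [Matrix.reindexAlgEquiv_apply, Matrix.reindex_apply, Matrix.submatrix_apply] at this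
  have hsx : e.symm (c * x, i) = (x, i) := by
    simp [he, Equiv.prodCongr]
  have hsy : e.symm (c * y, j) = (y, j) := by
    simp [he, Equiv.prodCongr]
  rw [hsx, hsy] at this
  exact this.symm

private lemma transfer_symm {V : Type*} [Fintype V] [DecidableEq V]
    (A : Matrix V V ℂ) (hA : Aᵀ = A) (t : ℝ) (u v : V) :
    transfer A t u v = transfer A t v u := by
  have h : (transfer A t)ᵀ = transfer A t := by
    unfold transfer
    rw [← Matrix.exp_transpose, Matrix.transpose_smul, hA]
  have h2 := congrFun (congrFun h v) u
  rw [Matrix.transpose_apply] at h2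
  exact h2

end Aux

/-- If `SC(G,R,L,S)` has PST between two distinct vertices with the same
second coordinate, then `g⁻¹h` has order `2`; in particular this is impossible when `G` has
odd order. -/
theorem semiCayley_pst_same_side_order_two
    {G : Type*} [CommGroup G] [Fintype G] [DecidableEq G]
    (R L S : Finset G) (hR : R⁻¹ = R) (hL : L⁻¹ = L)
    (h1R : (1 : G) ∉ R) (h1L : (1 : G) ∉ L) :
    (∀ (g h : G) (r : Fin 2) (t : ℝ), 0 < t → ((g, r) : G × Fin 2) ≠ (h, r) →
      pst (scAdj R L S) (g, r) (h, r) t → orderOf (g⁻¹ * h) = 2) ∧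
    (Odd (Fintype.card G) →
      ∀ (g h : G) (r : Fin 2) (t : ℝ), 0 < t → ((g, r) : G × Fin 2) ≠ (h, r) →
        ¬ pst (scAdj R L S) (g, r) (h, r) t) := by
  have hAh : (scAdj R L S)ᴴ = scAdj R L S := scAdj_herm R L S hR hL
  have hAt : (scAdj R L S)ᵀ = scAdj R L S := scAdj_transpose R L S hR hL
  haveI : Fact (Nat.Prime 2) := ⟨Nat.prime_two⟩
  have main : ∀ (g h : G) (r : Fin 2) (t : ℝ), 0 < t → ((g, r) : G × Fin 2) ≠ (h, r) →
      pst (scAdj R L S) (g, r) (h, r) t → orderOf (g⁻¹ * h) = 2 := by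
    intro g h r t ht hne hpst
    set a := g⁻¹ * h with ha
    have hgh : g ≠ h := fun hgh => hne (by rw [hgh])
    have ha1 : a ≠ 1 := by
      intro h1
      exact hgh (by rwa [ha, inv_mul_eq_one] at h1)
    have h1 : ‖transfer (scAdj R L S) t (1, r) (a, r)‖ = 1 := by
      have := transfer_shift R L S g⁻¹ g h r r t
      rw [inv_mul_cancel] at this
      rw [this]
      exact hpst
    have h2 : ‖transfer (scAdj R L S) t (a, r) (a * a, r)‖ = 1 := by
      have := transfer_shift R L S a 1 a r r t
      rw [mul_one] at this
      rw [this]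
      exact h1
    have h3 : ‖transfer (scAdj R L S) t (a, r) (1, r)‖ = 1 := by
      rw [transfer_symm (scAdj R L S) hAt t (a, r) (1, r)]
      exact h1
    have haa : a * a = 1 := by
      by_contra haa
      exact no_two_entries (scAdj R L S) hAh t (a, r) (1, r) (a * a, r)
        (fun hc => haa (by injection hc with h' _; exact h'.symm)) h3 h2
    exact orderOf_eq_prime (by rw [sq]; exact haa) ha1
  refine ⟨main, fun hodd g h r t ht hne hpst => ?_⟩
  have h2 := main g h r t ht hne hpst
  have hdvd : (2 : ℕ) ∣ Fintype.card G := h2 ▸ orderOf_dvd_card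
  rw [← Nat.not_even_iff_odd] at hodd
  exact hodd (even_iff_two_dvd.mpr hdvd)


end
end

section
/- Let G be a finite abelian group, R, S ⊆ G with R = R⁻¹ and 1 ∉ R, and Γ = SC(G,R,R,S). Then Γ is periodic if and only if Γ is integral; moreover, in that case the minimum period of the vertices is 2π/M, where M = gcd{λ − λ₁⁺ : λ an eigenvalue of Γ different from λ₁⁺} and λ₁⁺ = |R| + |S| is the largest eigenvalue of Γ. -/
open scoped Classical Pointwise
open Complex Finset Matrix

noncomputable section

-- ===================== auxiliary lemmas =====================

/-- Integer version of the semi-Cayley adjacency matrix. -/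
def scAdjZ {G : Type*} [Group G] (R L S : Finset G) :
    Matrix (G × Fin 2) (G × Fin 2) ℤ := fun u v =>
  if u.2 = 0 ∧ v.2 = 0 ∧ v.1 * u.1⁻¹ ∈ R then 1
  else if u.2 = 1 ∧ v.2 = 1 ∧ v.1 * u.1⁻¹ ∈ L then 1
  else if u.2 = 0 ∧ v.2 = 1 ∧ v.1 * u.1⁻¹ ∈ S then 1
  else if u.2 = 1 ∧ v.2 = 0 ∧ u.1 * v.1⁻¹ ∈ S then 1
  else 0

lemma phase_rigidity {J : Type*} [Fintype J] {s : ℂ} (c : J → ℝ) (z : J → ℂ)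
    (hc : ∀ j, 0 ≤ c j) (hz : ∀ j, ‖z j‖ = 1)
    (hsum : ∑ j, (c j : ℂ) * z j = s) (hone : ∑ j, c j = 1) (hs : ‖s‖ = 1) :
    ∀ j, c j ≠ 0 → z j = s := by
  have habs' : ∀ k, ‖z k * (starRingEnd ℂ) s‖ = 1 := by
    intro k
    rw [norm_mul, hz, Complex.norm_conj, hs, one_mul]
  have key : ∑ j, c j * (1 - (z j * (starRingEnd ℂ) s).re) = 0 := by
    have h1 : (∑ j, (c j : ℂ) * z j) * (starRingEnd ℂ) s = s * (starRingEnd ℂ) s := by rw [hsum]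
    have h2 : (s * (starRingEnd ℂ) s).re = 1 := by
      rw [Complex.mul_conj]
      simp [Complex.normSq_eq_norm_sq, hs]
    have h3 : (∑ j, (c j : ℂ) * z j * (starRingEnd ℂ) s).re = 1 := by
      rw [← Finset.sum_mul, h1, h2]
    rw [Complex.re_sum] at h3
    have h4 : ∀ j, ((c j : ℂ) * z j * (starRingEnd ℂ) s).re
        = c j * (z j * (starRingEnd ℂ) s).re := by
      intro j
      rw [mul_assoc, Complex.re_ofReal_mul]
    rw [Finset.sum_congr rfl (fun j _ => h4 j)] at h3
    have h5 : ∑ j, c j * (1 - (z j * (starRingEnd ℂ) s).re)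
        = ∑ j, c j - ∑ j, c j * (z j * (starRingEnd ℂ) s).re := by
      rw [← Finset.sum_sub_distrib]
      exact Finset.sum_congr rfl (fun j _ => by ring)
    rw [h5, hone, h3, sub_self]
  intro j hj
  have hterm : ∀ k, 0 ≤ c k * (1 - (z k * (starRingEnd ℂ) s).re) := by
    intro k
    apply mul_nonneg (hc k)
    have : (z k * (starRingEnd ℂ) s).re ≤ 1 := by
      calc (z k * (starRingEnd ℂ) s).re ≤ ‖z k * (starRingEnd ℂ) s‖ :=
            Complex.re_le_norm _
        _ = 1 := habs' k
    linarith
  have hj0 : c j * (1 - (z j * (starRingEnd ℂ) s).re) = 0 :=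
    (Finset.sum_eq_zero_iff_of_nonneg (fun k _ => hterm k)).mp key j (Finset.mem_univ j)
  have hre : (z j * (starRingEnd ℂ) s).re = 1 := by
    rcases mul_eq_zero.mp hj0 with h | h
    · exact absurd h hj
    · linarith
  have him : (z j * (starRingEnd ℂ) s).im = 0 := by
    have h6 := Complex.sq_norm (z j * (starRingEnd ℂ) s)
    rw [habs' j, Complex.normSq_apply, hre] at h6
    nlinarith [sq_nonneg (z j * (starRingEnd ℂ) s).im]
  have hone' : z j * (starRingEnd ℂ) s = 1 := Complex.ext (by simp [hre]) (by simp [him])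
  have hns : (starRingEnd ℂ) s * s = 1 := by
    have h7 := Complex.normSq_eq_norm_sq s
    rw [hs] at h7
    rw [mul_comm, Complex.mul_conj, h7]
    norm_num
  calc z j = z j * ((starRingEnd ℂ) s * s) := by rw [hns, mul_one]
    _ = (z j * (starRingEnd ℂ) s) * s := by ring
    _ = s := by rw [hone', one_mul]

section HermAux

variable {V : Type*} [Fintype V] [DecidableEq V] {A : Matrix V V ℂ}

lemma transfer_eq (hA : A.IsHermitian) (t : ℝ) :
    transfer A t = (hA.eigenvectorUnitary : Matrix V V ℂ)
      * Matrix.diagonal (fun j => Complex.exp (-(Complex.I * t) * (hA.eigenvalues j : ℂ)))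
      * star (hA.eigenvectorUnitary : Matrix V V ℂ) := by
  set U : Matrix V V ℂ := (hA.eigenvectorUnitary : Matrix V V ℂ) with hU
  have h1 : U * star U = 1 := Unitary.coe_mul_star_self _
  have h2 : star U * U = 1 := Unitary.coe_star_mul_self _
  set u : (Matrix V V ℂ)ˣ := ⟨U, star U, h1, h2⟩ with hu
  have hD : (-(Complex.I * (t:ℂ))) • (U * Matrix.diagonal (RCLike.ofReal ∘ hA.eigenvalues) * star U)
      = (u : Matrix V V ℂ)
        * ((-(Complex.I * (t:ℂ))) • Matrix.diagonal (RCLike.ofReal ∘ hA.eigenvalues))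
        * ((u⁻¹ : (Matrix V V ℂ)ˣ) : Matrix V V ℂ) := by
    simp only [hu, Units.inv_mk]
    rw [Matrix.mul_smul, Matrix.smul_mul]
  have hexpd : NormedSpace.exp
      ((-(Complex.I * (t:ℂ))) • Matrix.diagonal (RCLike.ofReal ∘ hA.eigenvalues))
      = Matrix.diagonal (fun j => Complex.exp (-(Complex.I * t) * (hA.eigenvalues j : ℂ))) := by
    rw [← Matrix.diagonal_smul, Matrix.exp_diagonal]
    refine congrArg Matrix.diagonal (funext fun j => ?_)
    rw [Pi.coe_exp]
    simp only [Pi.smul_apply, Function.comp_apply, smul_eq_mul]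
    rw [← Complex.exp_eq_exp_ℂ]
    norm_num
  calc transfer A t
      = NormedSpace.exp ((-(Complex.I * (t:ℂ))) •
          (U * Matrix.diagonal (RCLike.ofReal ∘ hA.eigenvalues) * star U)) := by
        rw [transfer]
        congr 2
        exact hA.spectral_theorem
    _ = (u : Matrix V V ℂ) * NormedSpace.exp
          ((-(Complex.I * (t:ℂ))) • Matrix.diagonal (RCLike.ofReal ∘ hA.eigenvalues))
        * ((u⁻¹ : (Matrix V V ℂ)ˣ) : Matrix V V ℂ) := by
        rw [hD, Matrix.exp_units_conj]
    _ = U * Matrix.diagonal (fun j => Complex.exp (-(Complex.I * t) * (hA.eigenvalues j : ℂ)))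
        * star U := by rw [hexpd]; rfl

lemma transfer_diag (hA : A.IsHermitian) (t : ℝ) (v : V) :
    transfer A t v v = ∑ j, Complex.exp (-(Complex.I * t) * (hA.eigenvalues j : ℂ))
      * ((hA.eigenvectorUnitary : Matrix V V ℂ) v j
          * (starRingEnd ℂ) ((hA.eigenvectorUnitary : Matrix V V ℂ) v j)) := by
  rw [transfer_eq hA t, Matrix.mul_apply]
  refine Finset.sum_congr rfl (fun j _ => ?_)
  rw [Matrix.mul_diagonal, Matrix.star_apply]
  simp only [RCLike.star_def]
  ring

lemma unitary_row_sum (hA : A.IsHermitian) (v : V) :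
    ∑ j, ((hA.eigenvectorUnitary : Matrix V V ℂ) v j
        * (starRingEnd ℂ) ((hA.eigenvectorUnitary : Matrix V V ℂ) v j)) = 1 := by
  have h0 : (hA.eigenvectorUnitary : Matrix V V ℂ) * star (hA.eigenvectorUnitary : Matrix V V ℂ)
      = 1 := Unitary.coe_mul_star_self _
  have h1 : ((hA.eigenvectorUnitary : Matrix V V ℂ)
      * star (hA.eigenvectorUnitary : Matrix V V ℂ)) v v = (1 : Matrix V V ℂ) v v := by rw [h0]
  rw [Matrix.mul_apply, Matrix.one_apply_eq] at h1
  rw [← h1]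
  refine Finset.sum_congr rfl (fun j _ => ?_)
  rw [Matrix.star_apply]
  simp [RCLike.star_def]

lemma unitary_col_sum (hA : A.IsHermitian) (j : V) :
    ∑ v, ((starRingEnd ℂ) ((hA.eigenvectorUnitary : Matrix V V ℂ) v j)
        * (hA.eigenvectorUnitary : Matrix V V ℂ) v j) = 1 := by
  have h0 : star (hA.eigenvectorUnitary : Matrix V V ℂ) * (hA.eigenvectorUnitary : Matrix V V ℂ)
      = 1 := Unitary.coe_star_mul_self _
  have h1 : (star (hA.eigenvectorUnitary : Matrix V V ℂ)
      * (hA.eigenvectorUnitary : Matrix V V ℂ)) j j = (1 : Matrix V V ℂ) j j := by rw [h0]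
  rw [Matrix.mul_apply, Matrix.one_apply_eq] at h1
  rw [← h1]
  refine Finset.sum_congr rfl (fun v _ => ?_)
  rw [Matrix.star_apply]
  simp [RCLike.star_def]

lemma spectrum_eq_range (hA : A.IsHermitian) :
    spectrum ℂ A = Set.range (fun j => (hA.eigenvalues j : ℂ)) := by
  set U : Matrix V V ℂ := (hA.eigenvectorUnitary : Matrix V V ℂ) with hU
  have h1 : U * star U = 1 := Unitary.coe_mul_star_self _
  have h2 : star U * U = 1 := Unitary.coe_star_mul_self _
  set u : (Matrix V V ℂ)ˣ := ⟨U, star U, h1, h2⟩ with hu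
  have hA' : A = (u : Matrix V V ℂ) * Matrix.diagonal (RCLike.ofReal ∘ hA.eigenvalues)
      * ((u⁻¹ : (Matrix V V ℂ)ˣ) : Matrix V V ℂ) := hA.spectral_theorem
  rw [congrArg (spectrum ℂ) hA', spectrum.units_conjugate, _root_.spectrum_diagonal]
  rfl

lemma eval_charpoly' (M : Matrix V V ℂ) (μ : ℂ) :
    M.charpoly.eval μ = (Matrix.scalar V μ - M).det := by
  rw [Matrix.charpoly, eval_det, Matrix.matPolyEquiv_charmatrix]
  simp

lemma mem_spectrum_isIntegral (A₀ : Matrix V V ℤ) (h : A = A₀.map (Int.cast))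
    {μ : ℂ} (hμ : μ ∈ spectrum ℂ A) : IsIntegral ℤ μ := by
  refine ⟨A₀.charpoly, A₀.charpoly_monic, ?_⟩
  have h1 : ¬IsUnit (algebraMap ℂ (Matrix V V ℂ) μ - A) := spectrum.mem_iff.mp hμ
  have h2 : (algebraMap ℂ (Matrix V V ℂ) μ - A).det = 0 := by
    by_contra hne
    exact h1 ((Matrix.isUnit_iff_isUnit_det _).mpr (isUnit_iff_ne_zero.mpr hne))
  have h3 : A.charpoly.eval μ = 0 := by
    rw [eval_charpoly']
    convert h2 using 2
    rw [Matrix.algebraMap_eq_diagonal]; rfl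
  calc Polynomial.eval₂ (algebraMap ℤ ℂ) μ A₀.charpoly
      = Polynomial.eval μ (A₀.charpoly.map (algebraMap ℤ ℂ)) := by rw [Polynomial.eval_map]
    _ = Polynomial.eval μ A.charpoly := by
        rw [h, ← Matrix.charpoly_map A₀ (algebraMap ℤ ℂ)]
        rfl
    _ = 0 := h3

lemma int_of_rat_algint {μ : ℂ} (h : IsIntegral ℤ μ) (q : ℚ) (hq : μ = (q : ℂ)) :
    ∃ k : ℤ, μ = (k : ℂ) := by
  subst hq
  have h1 : IsIntegral ℤ q := by
    have : algebraMap ℚ ℂ q = (q : ℂ) := rfl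
    rw [← this] at h
    exact (isIntegral_algebraMap_iff (algebraMap ℚ ℂ).injective).mp h
  obtain ⟨k, hk⟩ := IsIntegrallyClosed.isIntegral_iff.mp h1
  exact ⟨k, by rw [← hk]; norm_num⟩

lemma trace_eq_sum_eigs (hA : A.IsHermitian) : A.trace = ∑ j, (hA.eigenvalues j : ℂ) := by
  set U : Matrix V V ℂ := (hA.eigenvectorUnitary : Matrix V V ℂ) with hU
  have h2 : star U * U = 1 := Unitary.coe_star_mul_self _
  calc A.trace = (U * Matrix.diagonal (RCLike.ofReal ∘ hA.eigenvalues) * star U).trace := by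
        rw [← (show A = U * Matrix.diagonal (RCLike.ofReal ∘ hA.eigenvalues) * star U from hA.spectral_theorem)]
    _ = ((star U * U) * Matrix.diagonal (RCLike.ofReal ∘ hA.eigenvalues)).trace := by
        rw [Matrix.trace_mul_comm, ← mul_assoc]
    _ = ∑ j, (hA.eigenvalues j : ℂ) := by rw [h2, one_mul, Matrix.trace_diagonal]; rfl

lemma eig_index_of_eigvec (hA : A.IsHermitian) (lam1 : ℝ) (w : V → ℂ)
    (hAw : A *ᵥ w = ((lam1 : ℂ)) • w) (v : V) (hv : w v ≠ 0) :
    ∃ j, hA.eigenvalues j = lam1 ∧ (hA.eigenvectorUnitary : Matrix V V ℂ) v j ≠ 0 := by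
  set U : Matrix V V ℂ := (hA.eigenvectorUnitary : Matrix V V ℂ) with hU
  have h1 : U * star U = 1 := Unitary.coe_mul_star_self _
  have h2 : star U * U = 1 := Unitary.coe_star_mul_self _
  set c : V → ℂ := star U *ᵥ w with hc
  have hUc : U *ᵥ c = w := by
    rw [hc, Matrix.mulVec_mulVec, h1, Matrix.one_mulVec]
  have hDc : Matrix.diagonal (RCLike.ofReal ∘ hA.eigenvalues) *ᵥ c = (lam1 : ℂ) • c := by
    have e1 : star U * A = Matrix.diagonal (RCLike.ofReal ∘ hA.eigenvalues) * star U := by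
      conv_lhs => rw [(show A = U * Matrix.diagonal (RCLike.ofReal ∘ hA.eigenvalues) * star U from hA.spectral_theorem)]
      rw [← mul_assoc, ← mul_assoc, h2, one_mul]
    calc Matrix.diagonal (RCLike.ofReal ∘ hA.eigenvalues) *ᵥ c
        = (Matrix.diagonal (RCLike.ofReal ∘ hA.eigenvalues) * star U) *ᵥ w := by
          rw [hc, Matrix.mulVec_mulVec]
      _ = (star U * A) *ᵥ w := by rw [e1]
      _ = star U *ᵥ (A *ᵥ w) := by rw [Matrix.mulVec_mulVec]
      _ = star U *ᵥ ((lam1 : ℂ) • w) := by rw [hAw]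
      _ = (lam1 : ℂ) • c := by rw [Matrix.mulVec_smul, hc]
  have hcj : ∀ j, c j ≠ 0 → hA.eigenvalues j = lam1 := by
    intro j hcj
    have := congrFun hDc j
    rw [Matrix.mulVec_diagonal] at this
    simp only [Function.comp_apply, Pi.smul_apply, smul_eq_mul] at this
    have h3 : ((hA.eigenvalues j : ℂ)) = (lam1 : ℂ) := mul_right_cancel₀ hcj this
    exact_mod_cast h3
  have hwv : ∑ j, U v j * c j ≠ 0 := by
    have := congrFun hUc v
    rw [Matrix.mulVec] at this
    rw [show ∑ j, U v j * c j = U v ⬝ᵥ c from rfl]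
    rw [this]
    exact hv
  obtain ⟨j, _, hj⟩ := Finset.exists_ne_zero_of_sum_ne_zero hwv
  exact ⟨j, hcj j (fun h => hj (by rw [h, mul_zero])), fun h => hj (by rw [h, zero_mul])⟩

lemma phase_exp_abs (t lam : ℝ) : ‖Complex.exp (-(Complex.I * t) * lam)‖ = 1 := by
  rw [Complex.norm_exp]
  norm_num [Complex.mul_re]

lemma phase_eq_iff (t lam mu : ℝ) :
    Complex.exp (-(Complex.I * t) * lam) = Complex.exp (-(Complex.I * t) * mu)
      ↔ ∃ k : ℤ, t * (mu - lam) = 2 * Real.pi * k := by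
  rw [Complex.exp_eq_exp_iff_exists_int]
  constructor
  · rintro ⟨n, hn⟩
    refine ⟨n, ?_⟩
    have h2 := congrArg Complex.im hn
    simp only [Complex.neg_im, Complex.mul_im, Complex.mul_re, Complex.I_re, Complex.I_im,
      Complex.ofReal_re, Complex.ofReal_im, Complex.add_im, Complex.intCast_im,
      Complex.intCast_re, Complex.re_ofNat, Complex.im_ofNat] at h2
    ring_nf at h2 ⊢
    linarith
  · rintro ⟨k, hk⟩
    refine ⟨k, ?_⟩
    have h3 : (-(Complex.I * (t:ℂ)) * (lam:ℂ)) - (-(Complex.I * (t:ℂ)) * (mu:ℂ))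
        = (k : ℂ) * (2 * (Real.pi : ℂ) * Complex.I) := by
      calc (-(Complex.I * (t:ℂ)) * (lam:ℂ)) - (-(Complex.I * (t:ℂ)) * (mu:ℂ))
          = Complex.I * (((t * (mu - lam) : ℝ)) : ℂ) := by push_cast; ring
        _ = Complex.I * (((2 * Real.pi * k : ℝ)) : ℂ) := by rw [hk]
        _ = (k : ℂ) * (2 * (Real.pi : ℂ) * Complex.I) := by push_cast; ring
    linear_combination h3

lemma periodic_iff_phases (hA : A.IsHermitian) {lam1 : ℝ} {w : V → ℂ}
    (hw : ∀ v, w v ≠ 0) (hAw : A *ᵥ w = ((lam1 : ℂ)) • w) (t : ℝ) :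
    (∀ u, ‖transfer A t u u‖ = 1) ↔
      (∀ j, Complex.exp (-(Complex.I * t) * (hA.eigenvalues j : ℂ))
        = Complex.exp (-(Complex.I * t) * (lam1 : ℂ))) := by
  set U : Matrix V V ℂ := (hA.eigenvectorUnitary : Matrix V V ℂ) with hU
  constructor
  · intro h j
    -- find a vertex where column j is nonzero
    have hcol := unitary_col_sum hA j
    have hex : ∃ v, (starRingEnd ℂ) (U v j) * U v j ≠ 0 := by
      by_contra hno
      push_neg at hno
      rw [Finset.sum_eq_zero (fun v _ => hno v)] at hcol
      exact one_ne_zero hcol.symm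
    obtain ⟨v, hv⟩ := hex
    have hUvj : U v j ≠ 0 := fun h0 => hv (by rw [h0, mul_zero])
    -- apply phase rigidity at vertex v
    set cR : V → ℝ := fun k => Complex.normSq (U v k) with hcR
    have hmc : ∀ k, (cR k : ℂ) = U v k * (starRingEnd ℂ) (U v k) := by
      intro k
      rw [hcR]
      exact (Complex.mul_conj _).symm
    have hsum : ∑ k, (cR k : ℂ) * Complex.exp (-(Complex.I * t) * (hA.eigenvalues k : ℂ))
        = transfer A t v v := by
      rw [transfer_diag hA t v]
      refine Finset.sum_congr rfl (fun k _ => ?_)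
      rw [hmc]
      ring
    have hone : ∑ k, cR k = 1 := by
      have h8 := unitary_row_sum hA v
      rw [Finset.sum_congr rfl (fun k (_ : k ∈ Finset.univ) => (hmc k).symm)] at h8
      rw [← Complex.ofReal_sum] at h8
      exact_mod_cast h8
    have hrig := phase_rigidity cR
      (fun k => Complex.exp (-(Complex.I * t) * (hA.eigenvalues k : ℂ)))
      (fun k => Complex.normSq_nonneg _) (fun k => phase_exp_abs t _) hsum hone (h v)
    have hzj : Complex.exp (-(Complex.I * t) * (hA.eigenvalues j : ℂ)) = transfer A t v v :=
      hrig j (fun h0 => hUvj (by rwa [hcR, Complex.normSq_eq_zero] at h0))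
    obtain ⟨j', hj'1, hj'2⟩ := eig_index_of_eigvec hA lam1 w hAw v (hw v)
    have hzj' : Complex.exp (-(Complex.I * t) * (hA.eigenvalues j' : ℂ)) = transfer A t v v :=
      hrig j' (fun h0 => hj'2 (by rwa [hcR, Complex.normSq_eq_zero] at h0))
    rw [hzj, ← hzj', hj'1]
  · intro h u
    rw [transfer_diag hA t u]
    have : ∑ j, Complex.exp (-(Complex.I * t) * (hA.eigenvalues j : ℂ))
        * (U u j * (starRingEnd ℂ) (U u j))
        = Complex.exp (-(Complex.I * t) * (lam1 : ℂ))
          * ∑ j, (U u j * (starRingEnd ℂ) (U u j)) := by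
      rw [Finset.mul_sum]
      exact Finset.sum_congr rfl (fun j _ => by rw [h j])
    rw [this, unitary_row_sum hA u, mul_one]
    exact phase_exp_abs t lam1

end HermAux

lemma gcd_scaled_int {ι : Type*} [DecidableEq ι] (α : ℝ) (s : Finset ι) (m : ι → ℤ)
    (h : ∀ j ∈ s, ∃ z : ℤ, α * (m j : ℝ) = (z : ℝ)) :
    ∃ z : ℤ, α * ((s.gcd m : ℤ) : ℝ) = (z : ℝ) := by
  induction s using Finset.induction with
  | empty => exact ⟨0, by simp⟩
  | @insert a s ha ih =>
    rw [Finset.gcd_insert]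
    obtain ⟨za, hza⟩ := h a (Finset.mem_insert_self a s)
    obtain ⟨zg, hzg⟩ := ih (fun j hj => h j (Finset.mem_insert_of_mem hj))
    refine ⟨za * Int.gcdA (m a) (s.gcd m) + zg * Int.gcdB (m a) (s.gcd m), ?_⟩
    have hg : (GCDMonoid.gcd (m a) (s.gcd m) : ℤ)
        = (m a) * Int.gcdA (m a) (s.gcd m) + (s.gcd m) * Int.gcdB (m a) (s.gcd m) := by
      rw [← Int.gcd_eq_gcd_ab]
      rw [Int.coe_gcd]
    rw [hg]
    push_cast
    calc α * ((m a : ℝ) * (Int.gcdA (m a) (s.gcd m) : ℝ)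
            + ((s.gcd m : ℤ) : ℝ) * (Int.gcdB (m a) (s.gcd m) : ℝ))
        = (α * (m a : ℝ)) * (Int.gcdA (m a) (s.gcd m) : ℝ)
          + (α * ((s.gcd m : ℤ) : ℝ)) * (Int.gcdB (m a) (s.gcd m) : ℝ) := by ring
      _ = (za : ℝ) * (Int.gcdA (m a) (s.gcd m) : ℝ)
          + (zg : ℝ) * (Int.gcdB (m a) (s.gcd m) : ℝ) := by rw [hza, hzg]
      _ = _ := by ring

lemma finset_gcd_nonneg {ι : Type*} (s : Finset ι) (m : ι → ℤ) : 0 ≤ s.gcd m := by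
  classical
  induction s using Finset.induction with
  | empty => simp
  | @insert a s ha ih =>
    rw [Finset.gcd_insert, ← Int.coe_gcd]
    exact Int.natCast_nonneg _

section SCAux
set_option linter.unusedSectionVars false
variable {G : Type*} [CommGroup G] [Fintype G] [DecidableEq G] (R S : Finset G)


lemma scAdj_isHermitian (hR : R⁻¹ = R) : (scAdj R R S).IsHermitian := by
  have hmem : ∀ a b : G, a * b⁻¹ ∈ R ↔ b * a⁻¹ ∈ R := by
    intro a b
    conv_lhs => rw [← hR]
    rw [Finset.mem_inv', _root_.mul_inv_rev, inv_inv]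
  ext u v
  rw [Matrix.conjTranspose_apply]
  have hstar : star (scAdj R R S v u) = scAdj R R S v u := by
    rw [scAdj]; split_ifs <;> simp
  rw [hstar]
  rcases u with ⟨x, i⟩; rcases v with ⟨y, j⟩
  rw [scAdj, scAdj]
  simp only []
  fin_cases i <;> fin_cases j <;>
    simp only [Fin.isValue, Fin.zero_eq_one_iff, Fin.one_eq_zero_iff, Nat.succ_ne_self,
      false_and, and_false, if_false, true_and, OfNat.ofNat_ne_one, Nat.reduceEqDiff] <;>
    simp [hmem x y]

lemma scAdj_intMatrix : scAdj R R S = (scAdjZ R R S).map (Int.cast) := by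
  ext u v
  rw [Matrix.map_apply, scAdj, scAdjZ]
  split_ifs <;> simp

lemma scAdj_trace (h1R : (1 : G) ∉ R) : (scAdj R R S).trace = 0 := by
  rw [Matrix.trace]
  apply Finset.sum_eq_zero
  rintro ⟨x, i⟩ _
  rw [Matrix.diag_apply, scAdj]
  fin_cases i <;> simp [h1R]

lemma count_aux (T : Finset G) (x : G) :
    ∑ y : G, (if y * x⁻¹ ∈ T then (1 : ℂ) else 0) = T.card := by
  calc ∑ y : G, (if y * x⁻¹ ∈ T then (1 : ℂ) else 0)
      = ∑ z : G, (if z ∈ T then (1 : ℂ) else 0) :=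
        Fintype.sum_equiv (Equiv.mulRight x⁻¹) _ _ (fun y => rfl)
    _ = ∑ _z ∈ T, (1 : ℂ) := by rw [Finset.sum_ite_mem, Finset.univ_inter]
    _ = T.card := by rw [Finset.sum_const, nsmul_eq_mul, mul_one]

lemma count_aux' (T : Finset G) (x : G) :
    ∑ y : G, (if x * y⁻¹ ∈ T then (1 : ℂ) else 0) = T.card := by
  have hiff : ∀ y : G, (x * y⁻¹ ∈ T) ↔ (y * x⁻¹ ∈ T⁻¹) := by
    intro y
    rw [Finset.mem_inv', _root_.mul_inv_rev, inv_inv]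
  calc ∑ y : G, (if x * y⁻¹ ∈ T then (1 : ℂ) else 0)
      = ∑ y : G, (if y * x⁻¹ ∈ T⁻¹ then (1 : ℂ) else 0) :=
        Finset.sum_congr rfl (fun y _ => if_congr (hiff y) rfl rfl)
    _ = ((T⁻¹).card : ℂ) := count_aux _ _
    _ = T.card := by rw [Finset.card_inv]

lemma scAdj_ones : (scAdj R R S) *ᵥ (fun _ => (1 : ℂ))
    = (((R.card + S.card : ℕ) : ℂ)) • (fun _ => (1 : ℂ)) := by
  funext u
  rw [Matrix.mulVec]
  have hd : (scAdj R R S) u ⬝ᵥ (fun _ => (1:ℂ)) = ∑ v, scAdj R R S u v := by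
    rw [dotProduct]
    exact Finset.sum_congr rfl (fun v _ => by rw [mul_one])
  rw [hd]
  rcases u with ⟨x, i⟩
  have hi : i = 0 ∨ i = 1 := by
    rcases i with ⟨_ | _ | n, h⟩
    · exact Or.inl rfl
    · exact Or.inr rfl
    · omega
  rw [Fintype.sum_prod_type]
  have hsum2 : ∀ y : G, ∑ j : Fin 2, scAdj R R S (x, i) (y, j)
      = scAdj R R S (x, i) (y, 0) + scAdj R R S (x, i) (y, 1) := fun y => Fin.sum_univ_two _
  rw [Finset.sum_congr rfl (fun y _ => hsum2 y), Finset.sum_add_distrib]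
  rcases hi with rfl | rfl
  · have e0 : ∀ y : G, scAdj R R S (x, 0) (y, 0) = (if y * x⁻¹ ∈ R then (1:ℂ) else 0) := by
      intro y; rw [scAdj]; simp
    have e1 : ∀ y : G, scAdj R R S (x, 0) (y, 1) = (if y * x⁻¹ ∈ S then (1:ℂ) else 0) := by
      intro y; rw [scAdj]; simp
    rw [Finset.sum_congr rfl (fun y _ => e0 y), Finset.sum_congr rfl (fun y _ => e1 y),
      count_aux, count_aux]
    simp
  · have e0 : ∀ y : G, scAdj R R S (x, 1) (y, 0) = (if x * y⁻¹ ∈ S then (1:ℂ) else 0) := by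
      intro y; rw [scAdj]; simp
    have e1 : ∀ y : G, scAdj R R S (x, 1) (y, 1) = (if y * x⁻¹ ∈ R then (1:ℂ) else 0) := by
      intro y; rw [scAdj]; simp
    rw [Finset.sum_congr rfl (fun y _ => e0 y), Finset.sum_congr rfl (fun y _ => e1 y),
      count_aux, count_aux']
    simp [add_comm]

end SCAux

/-- `SC(G,R,R,S)` is periodic iff it is integral, in which case the minimum
period is `2π/M` where `M` is the gcd of the differences `λ - λ₁⁺` over the eigenvalues
`λ ≠ λ₁⁺ = |R| + |S|`. -/
theorem semiCayley_RR_periodic_iff_integral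
    {G : Type*} [CommGroup G] [Fintype G] [DecidableEq G]
    (R S : Finset G) (hR : R⁻¹ = R) (h1R : (1 : G) ∉ R) :
    ((∃ t : ℝ, 0 < t ∧ ∀ u : G × Fin 2, ‖transfer (scAdj R R S) t u u‖ = 1) ↔
      isIntegral (scAdj R R S)) ∧
    (isIntegral (scAdj R R S) →
      ∀ M : ℤ,
        IsGreatest {d : ℤ | 0 < d ∧ ∀ μ ∈ spectrum ℂ (scAdj R R S),
            ∃ k : ℤ, μ - ((R.card : ℂ) + (S.card : ℂ)) = (k : ℂ) * (d : ℂ)} M →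
        IsLeast {t : ℝ | 0 < t ∧ ∀ u : G × Fin 2,
            ‖transfer (scAdj R R S) t u u‖ = 1}
          (2 * Real.pi / (M : ℝ))) := by
  classical
  have hA : (scAdj R R S).IsHermitian := scAdj_isHermitian R S hR
  set lam1 : ℝ := ((R.card + S.card : ℕ) : ℝ) with hlam1
  have hcards : ((R.card : ℂ) + (S.card : ℂ)) = ((lam1 : ℝ) : ℂ) := by
    rw [hlam1]; push_cast; ring
  have hw : ∀ v : G × Fin 2, (fun _ : G × Fin 2 => (1:ℂ)) v ≠ 0 := fun v => one_ne_zero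
  have hAw : (scAdj R R S) *ᵥ (fun _ => (1:ℂ)) = ((lam1 : ℂ)) • (fun _ => (1:ℂ)) := by
    rw [scAdj_ones R S, show (((R.card + S.card : ℕ) : ℂ)) = ((lam1 : ℂ)) from by
      rw [hlam1]; push_cast; ring]
  have hspec : spectrum ℂ (scAdj R R S) = Set.range (fun j => (hA.eigenvalues j : ℂ)) :=
    spectrum_eq_range hA
  have heigmem : ∀ j, ((hA.eigenvalues j : ℂ)) ∈ spectrum ℂ (scAdj R R S) := by
    intro j
    rw [hspec]
    exact Set.mem_range_self j
  have heigint : isIntegral (scAdj R R S) → ∀ j, ∃ k : ℤ, hA.eigenvalues j = (k : ℝ) := by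
    intro hint j
    obtain ⟨k, hk⟩ := hint _ (heigmem j)
    exact ⟨k, by exact_mod_cast hk⟩
  have hNpos : 0 < (Fintype.card (G × Fin 2) : ℝ) := by
    have : 0 < Fintype.card (G × Fin 2) := Fintype.card_pos
    exact_mod_cast this
  refine ⟨⟨?_, ?_⟩, ?_⟩
  · -- periodic → integral
    rintro ⟨t, ht, hper⟩
    have hph := (periodic_iff_phases hA hw hAw t).mp hper
    have hk' : ∀ j, ∃ k : ℤ, t * (lam1 - hA.eigenvalues j) = 2 * Real.pi * k :=
      fun j => (phase_eq_iff t _ lam1).mp (hph j)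
    choose k hk using hk'
    by_cases h0 : R.card + S.card = 0
    · have hR0 : R = ∅ := Finset.card_eq_zero.mp (by omega)
      have hS0 : S = ∅ := Finset.card_eq_zero.mp (by omega)
      have hA0 : scAdj R R S = 0 := by
        subst hR0; subst hS0
        ext u v
        rw [scAdj]
        simp
      intro μ hμ
      rw [hA0, spectrum.zero_eq] at hμ
      exact ⟨0, by simpa using hμ⟩
    · have hlam1pos : 0 < lam1 := by
        rw [hlam1]
        exact_mod_cast Nat.pos_of_ne_zero h0
      have htrC := trace_eq_sum_eigs hA
      rw [scAdj_trace R S h1R] at htrC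
      have htr0 : ∑ j, hA.eigenvalues j = 0 := by
        have : ((∑ j, hA.eigenvalues j : ℝ) : ℂ) = 0 := by
          rw [Complex.ofReal_sum]
          exact htrC.symm
        exact_mod_cast this
      set K : ℤ := ∑ j, k j with hK
      have hsum : t * ((Fintype.card (G × Fin 2) : ℝ) * lam1) = 2 * Real.pi * (K : ℝ) := by
        have hs1 := Finset.sum_congr rfl (fun j (_ : j ∈ Finset.univ) => hk j)
        have hl : ∑ j, t * (lam1 - hA.eigenvalues j)
            = t * ((Fintype.card (G × Fin 2) : ℝ) * lam1) := by
          rw [← Finset.mul_sum, Finset.sum_sub_distrib, htr0, sub_zero, Finset.sum_const,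
            Finset.card_univ, nsmul_eq_mul]
        have hr : ∑ j, 2 * Real.pi * (k j : ℝ) = 2 * Real.pi * (K : ℝ) := by
          rw [← Finset.mul_sum, hK]
          push_cast
          ring
        rw [← hl, ← hr]
        exact hs1
      have hKne : (K : ℝ) ≠ 0 := by
        intro hzero
        rw [hzero, mul_zero] at hsum
        have : 0 < t * ((Fintype.card (G × Fin 2) : ℝ) * lam1) := by positivity
        linarith
      intro μ hμ
      have hμ' := hμ
      rw [hspec] at hμ'
      obtain ⟨j, hj⟩ := hμ'
      have hid : (K:ℝ) * (lam1 - hA.eigenvalues j) = (k j : ℝ)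
          * ((Fintype.card (G × Fin 2) : ℝ) * lam1) := by
        have h2 : t * ((K:ℝ) * (lam1 - hA.eigenvalues j))
            = t * ((k j : ℝ) * ((Fintype.card (G × Fin 2) : ℝ) * lam1)) := by
          calc t * ((K:ℝ) * (lam1 - hA.eigenvalues j))
              = (K:ℝ) * (t * (lam1 - hA.eigenvalues j)) := by ring
            _ = (K:ℝ) * (2 * Real.pi * (k j : ℝ)) := by rw [hk j]
            _ = (k j : ℝ) * (2 * Real.pi * (K:ℝ)) := by ring
            _ = (k j : ℝ) * (t * ((Fintype.card (G × Fin 2) : ℝ) * lam1)) := by rw [← hsum]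
            _ = t * ((k j : ℝ) * ((Fintype.card (G × Fin 2) : ℝ) * lam1)) := by ring
        exact mul_left_cancel₀ (ne_of_gt ht) h2
      set q : ℚ := ((R.card + S.card : ℕ) : ℚ)
        - ((k j : ℚ) * ((Fintype.card (G × Fin 2) : ℕ) : ℚ) * ((R.card + S.card : ℕ) : ℚ))
          / (K : ℚ) with hq
      have hKneQ : (K : ℚ) ≠ 0 := by exact_mod_cast (by exact_mod_cast hKne : (K:ℤ) ≠ 0)
      have hlamq : hA.eigenvalues j = (q : ℝ) := by
        have hqr : (q : ℝ) = lam1 - ((k j : ℝ) * ((Fintype.card (G × Fin 2) : ℝ) * lam1)) / (K:ℝ) := by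
          rw [hq, hlam1]
          push_cast
          ring
        rw [hqr]
        have hKR : (K:ℝ) ≠ 0 := hKne
        have h3 : lam1 - hA.eigenvalues j
            = (k j : ℝ) * ((Fintype.card (G × Fin 2) : ℝ) * lam1) / (K:ℝ) := by
          rw [eq_div_iff hKR]
          linarith [hid]
        linarith [h3]
      have hμq : μ = (q : ℂ) := by
        rw [← hj]
        show ((hA.eigenvalues j : ℝ) : ℂ) = (q : ℂ)
        rw [hlamq]
        norm_num
      exact int_of_rat_algint
        (mem_spectrum_isIntegral (scAdjZ R R S) (scAdj_intMatrix R S) hμ) q hμq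
  · -- integral → periodic
    intro hint
    refine ⟨2 * Real.pi, Real.two_pi_pos, ?_⟩
    apply (periodic_iff_phases hA hw hAw _).mpr
    intro j
    obtain ⟨kj, hkj⟩ := heigint hint j
    have h1 : Complex.exp (-(Complex.I * ((2 * Real.pi : ℝ) : ℂ)) * (hA.eigenvalues j : ℂ)) = 1 := by
      have he : (-(Complex.I * ((2 * Real.pi : ℝ) : ℂ)) * (hA.eigenvalues j : ℂ))
          = ((-kj : ℤ) : ℂ) * (2 * (Real.pi : ℂ) * Complex.I) := by
        rw [show ((hA.eigenvalues j : ℝ) : ℂ) = ((kj : ℝ) : ℂ) from by rw [hkj]]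
        push_cast
        ring
      rw [he, Complex.exp_int_mul_two_pi_mul_I]
    have h2 : Complex.exp (-(Complex.I * ((2 * Real.pi : ℝ) : ℂ)) * ((lam1 : ℝ) : ℂ)) = 1 := by
      have he : (-(Complex.I * ((2 * Real.pi : ℝ) : ℂ)) * ((lam1 : ℝ) : ℂ))
          = ((-(R.card + S.card : ℕ) : ℤ) : ℂ) * (2 * (Real.pi : ℂ) * Complex.I) := by
        rw [hlam1]
        push_cast
        ring
      rw [he, Complex.exp_int_mul_two_pi_mul_I]
    rw [h1, h2]
  · -- minimality of the period
    intro hint M hM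
    obtain ⟨⟨hMpos, hMdvd⟩, hMub⟩ := hM
    have hMR : (0:ℝ) < (M : ℝ) := by exact_mod_cast hMpos
    constructor
    · -- 2π/M is a period
      refine ⟨by positivity, ?_⟩
      apply (periodic_iff_phases hA hw hAw _).mpr
      intro j
      obtain ⟨kj, hkj⟩ := hMdvd ((hA.eigenvalues j : ℂ)) (heigmem j)
      rw [hcards] at hkj
      have hreal : hA.eigenvalues j - lam1 = (kj : ℝ) * (M : ℝ) := by
        have : (((hA.eigenvalues j - lam1 : ℝ)) : ℂ) = (((kj : ℝ) * (M:ℝ) : ℝ) : ℂ) := by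
          push_cast
          push_cast at hkj
          linear_combination hkj
        exact_mod_cast this
      apply (phase_eq_iff _ _ _).mpr
      refine ⟨-kj, ?_⟩
      have hMne : (M:ℝ) ≠ 0 := ne_of_gt hMR
      field_simp
      rw [show lam1 - hA.eigenvalues j = -((kj:ℝ) * (M:ℝ)) by linarith [hreal]]
      push_cast
      ring
    · -- it is the least period
      rintro t ⟨ht, hper⟩
      have hph := (periodic_iff_phases hA hw hAw t).mp hper
      have hkk' : ∀ j, ∃ kk : ℤ, t * (lam1 - hA.eigenvalues j) = 2 * Real.pi * kk :=
        fun j => (phase_eq_iff t _ lam1).mp (hph j)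
      choose kk hkk using hkk'
      have hm' : ∀ j, ∃ mz : ℤ, hA.eigenvalues j - lam1 = (mz : ℝ) := by
        intro j
        obtain ⟨z, hz⟩ := heigint hint j
        refine ⟨z - (R.card + S.card : ℤ), ?_⟩
        rw [hz, hlam1]
        push_cast
        ring
      choose m hmj using hm'
      by_cases hall : ∀ j, m j = 0
      · exfalso
        have hmem : (M + 1) ∈ {d : ℤ | 0 < d ∧ ∀ μ ∈ spectrum ℂ (scAdj R R S),
            ∃ kz : ℤ, μ - ((R.card : ℂ) + (S.card : ℂ)) = (kz : ℂ) * (d : ℂ)} := by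
          refine ⟨by omega, fun μ hμ => ?_⟩
          rw [hspec] at hμ
          obtain ⟨j, hj⟩ := hμ
          refine ⟨0, ?_⟩
          have h5 : hA.eigenvalues j - lam1 = 0 := by rw [hmj j, hall j]; norm_num
          rw [← hj, hcards]
          rw [show ((hA.eigenvalues j : ℝ) : ℂ) - ((lam1 : ℝ):ℂ) = (((hA.eigenvalues j - lam1 : ℝ)) : ℂ) by push_cast; ring]
          rw [h5]
          norm_num
        have := hMub hmem
        omega
      · push_neg at hall
        obtain ⟨j₀, hj₀⟩ := hall
        set g : ℤ := Finset.univ.gcd m with hg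
        have hgdvd : ∀ j, g ∣ m j := fun j => Finset.gcd_dvd (Finset.mem_univ j)
        have hgne : g ≠ 0 := by
          intro hz
          exact hj₀ (Finset.gcd_eq_zero_iff.mp (hg ▸ hz) j₀ (Finset.mem_univ j₀))
        have hgpos : 0 < g := lt_of_le_of_ne (finset_gcd_nonneg _ _) (Ne.symm hgne)
        have hgD : g ∈ {d : ℤ | 0 < d ∧ ∀ μ ∈ spectrum ℂ (scAdj R R S),
            ∃ kz : ℤ, μ - ((R.card : ℂ) + (S.card : ℂ)) = (kz : ℂ) * (d : ℂ)} := by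
          refine ⟨hgpos, fun μ hμ => ?_⟩
          rw [hspec] at hμ
          obtain ⟨j, hj⟩ := hμ
          obtain ⟨c, hc⟩ := hgdvd j
          refine ⟨c, ?_⟩
          rw [← hj, hcards]
          rw [show ((hA.eigenvalues j : ℝ) : ℂ) - ((lam1 : ℝ):ℂ) = (((hA.eigenvalues j - lam1 : ℝ)) : ℂ) by push_cast; ring]
          rw [hmj j, hc]
          push_cast
          ring
        have hgM : g ≤ M := hMub hgD
        have h2πpos : (0:ℝ) < 2 * Real.pi := Real.two_pi_pos
        have hα : ∀ j ∈ Finset.univ, ∃ z : ℤ, (t / (2 * Real.pi)) * (m j : ℝ) = (z : ℝ) := by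
          intro j _
          refine ⟨-kk j, ?_⟩
          have h6 : t * (m j : ℝ) = -(2 * Real.pi * (kk j : ℝ)) := by
            have h7 : t * (lam1 - hA.eigenvalues j) = 2 * Real.pi * (kk j : ℝ) := hkk j
            have h8 : lam1 - hA.eigenvalues j = -(m j : ℝ) := by
              rw [← hmj j]; ring
            rw [h8] at h7
            linarith [h7]
          field_simp
          rw [h6]
          push_cast
          ring
        obtain ⟨z, hz⟩ := gcd_scaled_int (t / (2 * Real.pi)) Finset.univ m hα
        rw [← hg] at hz
        have hgR : (0:ℝ) < (g:ℝ) := by exact_mod_cast hgpos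
        have hzpos : (0:ℝ) < (z:ℝ) := by
          rw [← hz]
          positivity
        have hz1 : (1:ℝ) ≤ (z:ℝ) := by
          have : (0:ℤ) < z := by exact_mod_cast hzpos
          exact_mod_cast this
        -- t/(2π) * g = z ≥ 1 ⇒ t*g ≥ 2π ⇒ t ≥ 2π/g ≥ 2π/M
        have h9 : 2 * Real.pi ≤ t * (g:ℝ) := by
          have h10 : (t / (2 * Real.pi)) * (g:ℝ) ≥ 1 := by rw [hz]; exact hz1
          calc 2 * Real.pi = (2 * Real.pi) * 1 := by ring
            _ ≤ (2 * Real.pi) * ((t / (2 * Real.pi)) * (g:ℝ)) := by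
                exact mul_le_mul_of_nonneg_left h10 (le_of_lt h2πpos)
            _ = t * (g:ℝ) := by field_simp
        have h11 : 2 * Real.pi / (M:ℝ) ≤ 2 * Real.pi / (g:ℝ) := by
          apply div_le_div_of_nonneg_left (le_of_lt h2πpos) hgR
          exact_mod_cast hgM
        have h12 : 2 * Real.pi / (g:ℝ) ≤ t := by
          rw [div_le_iff₀ hgR]
          exact h9
        linarith

end
end
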